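/- arXiv:1708.05539 — 7 statements merged into one kernel-verified Lean document; each statement's English description precedes it below -/
import Mathlib

section
/- Let A be an n×n symmetric positive definite tridiagonal matrix with diagonal entries a_1,...,a_n and off-diagonal entries -b_2,...,-b_n (i.e., A_{i,i+1} = A_{i+1,i} = -b_{i+1}). If b_l > 0 for all l = 2,...,n, then every entry of A^{-1} is strictly positive. -/
open Matrix

/-- For a symmetric positive definite tridiagonal matrix with strictly negative
off-diagonal entries (`A_{i,i+1} = -b_{i+1}` with `b_{i+1} > 0`), every entry of
`A⁻¹` is strictly positive. -/
theorem stmt5 (n : ℕ) (A : Matrix (Fin n) (Fin n) ℝ) (hPD : A.PosDef)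
    (htri : ∀ i j : Fin n, 1 < |((i : ℕ) : ℤ) - ((j : ℕ) : ℤ)| → A i j = 0)
    (hoff : ∀ i j : Fin n, |((i : ℕ) : ℤ) - ((j : ℕ) : ℤ)| = 1 → A i j < 0) :
    ∀ i j : Fin n, 0 < A⁻¹ i j := by
  intro i j
  -- the j-th column of A⁻¹
  set x : Fin n → ℝ := fun m => A⁻¹ m j with hxdef
  -- A * x = e_j
  have hx : ∀ m : Fin n, A.mulVec x m = if m = j then 1 else 0 := by
    intro m
    have h : A * A⁻¹ = 1 := mul_nonsing_inv A (isUnit_iff_isUnit_det A |>.1 hPD.isUnit)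
    have := congrFun (congrFun h m) j
    rw [Matrix.mul_apply] at this
    simpa [hxdef, Matrix.mulVec, dotProduct, Matrix.one_apply] using this
  -- the diagonal entry of A⁻¹ is positive
  have hxj : 0 < x j := by
    have hne : (Pi.single j 1 : Fin n → ℝ) ≠ 0 := by
      intro hc
      have := congrFun hc j
      rw [Pi.single_eq_same] at this
      exact one_ne_zero this
    have h := hPD.inv.dotProduct_mulVec_pos hne
    simpa [hxdef, dotProduct, mulVec, Pi.single_apply, Finset.sum_ite_eq] using h
  -- off-diagonal entries of A are nonpositive
  have hnd : ∀ p q : Fin n, p ≠ q → A p q ≤ 0 := by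
    intro p q hpq
    have hne : ((p : ℕ) : ℤ) ≠ ((q : ℕ) : ℤ) := by
      have : (p : ℕ) ≠ (q : ℕ) := fun h => hpq (Fin.ext h)
      exact_mod_cast this
    rcases lt_or_eq_of_le (Int.one_le_abs (sub_ne_zero.mpr hne)) with h | h
    · exact (htri p q h).le
    · exact (hoff p q h.symm).le
  -- symmetry of A
  have hsym : ∀ p q : Fin n, A p q = A q p := by
    intro p q
    have := congrFun (congrFun hPD.1 p) q
    simpa [Matrix.conjTranspose_apply] using this.symm
  -- nonnegativity of x via the variational argument with y = |x|
  set y : Fin n → ℝ := fun m => |x m| with hydef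
  have hyAx : y ⬝ᵥ A.mulVec x = y j := by
    have : A.mulVec x = fun m => if m = j then 1 else 0 := funext hx
    rw [this]
    simp [dotProduct, mul_ite, Finset.sum_ite_eq]
  have hxAx : x ⬝ᵥ A.mulVec x = x j := by
    have : A.mulVec x = fun m => if m = j then 1 else 0 := funext hx
    rw [this]
    simp [dotProduct, mul_ite, Finset.sum_ite_eq]
  have hswap : x ⬝ᵥ A.mulVec y = y ⬝ᵥ A.mulVec x := by
    simp only [dotProduct, mulVec, Finset.mul_sum]
    rw [Finset.sum_comm]
    refine Finset.sum_congr rfl fun p _ => Finset.sum_congr rfl fun q _ => ?_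
    rw [hsym q p]; ring
  have hq1 : y ⬝ᵥ A.mulVec y ≤ x ⬝ᵥ A.mulVec x := by
    simp only [dotProduct, mulVec, Finset.mul_sum]
    refine Finset.sum_le_sum fun p _ => Finset.sum_le_sum fun q _ => ?_
    by_cases hpq : p = q
    · subst hpq
      have h2 : |x p| * |x p| = x p * x p := abs_mul_abs_self (x p)
      simp only [hydef]
      refine le_of_eq ?_
      calc |x p| * (A p p * |x p|) = A p p * (|x p| * |x p|) := by ring
        _ = A p p * (x p * x p) := by rw [h2]
        _ = x p * (A p p * x p) := by ring
    · have hA := hnd p q hpq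
      have h3 : x p * x q ≤ |x p| * |x q| := by
        calc x p * x q ≤ |x p * x q| := le_abs_self _
        _ = |x p| * |x q| := abs_mul _ _
      simp only [hydef]
      nlinarith
  have hkey : (y - x) ⬝ᵥ A.mulVec (y - x) ≤ 0 := by
    rw [Matrix.mulVec_sub, dotProduct_sub, sub_dotProduct, sub_dotProduct]
    have hjle : x j ≤ y j := le_abs_self _
    rw [hswap, hyAx, hxAx]
    linarith
  have hyx : y = x := by
    by_contra hne
    have h0 : y - x ≠ 0 := sub_ne_zero.mpr hne
    have := hPD.dotProduct_mulVec_pos h0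
    rw [star_trivial] at this
    linarith
  have hnonneg : ∀ m : Fin n, 0 ≤ x m := by
    intro m
    have := congrFun hyx m
    simp only [hydef] at this
    rw [← this]
    exact abs_nonneg _
  -- propagation step along the chain
  have hstep : ∀ p q : Fin n, 0 < x p → ((p : ℕ) + 1 = (q : ℕ) ∨ (q : ℕ) + 1 = (p : ℕ)) →
      0 < x q := by
    intro p q hp hadj
    rcases (hnonneg q).lt_or_eq with h | h
    · exact h
    exfalso
    have hpq : p ≠ q := by
      intro hc; subst hc; omega
    have hAqp : A q p < 0 := by
      refine hoff q p ?_
      have hd : ((q : ℕ) : ℤ) - ((p : ℕ) : ℤ) = 1 ∨ ((q : ℕ) : ℤ) - ((p : ℕ) : ℤ) = -1 := by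
        rcases hadj with h1 | h1
        · left; omega
        · right; omega
      rcases hd with hd | hd <;> rw [hd] <;> norm_num
    have hlt : (Finset.univ.sum fun k => A q k * x k) < 0 := by
      have := Finset.sum_lt_sum (s := Finset.univ)
        (f := fun k : Fin n => A q k * x k) (g := fun _ => (0 : ℝ))
        (fun k _ => by
          by_cases hk : k = q
          · show A q k * x k ≤ (0 : ℝ)
            rw [hk, ← h, mul_zero]
          · exact mul_nonpos_of_nonpos_of_nonneg (hnd q k (Ne.symm hk)) (hnonneg k))
        ⟨p, Finset.mem_univ p, mul_neg_of_neg_of_pos hAqp hp⟩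
      simpa using this
    have hge : (0 : ℝ) ≤ Finset.univ.sum fun k => A q k * x k := by
      have h1 : A.mulVec x q = Finset.univ.sum fun k => A q k * x k := rfl
      rw [← h1, hx q]
      split <;> norm_num
    linarith
  -- induction upward from j
  have hup : ∀ d : ℕ, ∀ p : Fin n, (p : ℕ) = (j : ℕ) + d → 0 < x p := by
    intro d
    induction d with
    | zero => intro p hp; have : p = j := Fin.ext (by omega); rw [this]; exact hxj
    | succ d ih =>
      intro p hp
      have hlt : (j : ℕ) + d < n := by have := p.isLt; omega
      have hprev := ih ⟨(j : ℕ) + d, hlt⟩ rfl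
      exact hstep _ p hprev (Or.inl (by simp; omega))
  -- induction downward from j
  have hdown : ∀ d : ℕ, ∀ p : Fin n, (p : ℕ) + d = (j : ℕ) → 0 < x p := by
    intro d
    induction d with
    | zero => intro p hp; have : p = j := Fin.ext (by omega); rw [this]; exact hxj
    | succ d ih =>
      intro p hp
      have hlt : (p : ℕ) + 1 < n := by have := j.isLt; omega
      have hprev := ih ⟨(p : ℕ) + 1, hlt⟩ (by simp; omega)
      exact hstep _ p hprev (Or.inr (by simp))
  rcases le_or_gt (j : ℕ) (i : ℕ) with h | h
  · exact hup ((i : ℕ) - (j : ℕ)) i (by omega)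
  · exact hdown ((j : ℕ) - (i : ℕ)) i (by omega)
end

section
/- Let A be an n×n symmetric positive definite tridiagonal matrix with off-diagonal entries -b_2,...,-b_n where b_l < 0 for all l. Then (A^{-1})_{ij} < 0 when |i-j| is odd and (A^{-1})_{ij} > 0 when |i-j| is even. -/
open Matrix

private theorem key : ∀ (n : ℕ) (A : Matrix (Fin n) (Fin n) ℝ), A.PosDef →
    (∀ i j : Fin n, 1 < |((i : ℕ) : ℤ) - ((j : ℕ) : ℤ)| → A i j = 0) →
    (∀ i j : Fin n, |((i : ℕ) : ℤ) - ((j : ℕ) : ℤ)| = 1 → 0 < A i j) →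
    ∀ i j : Fin n,
      (Odd (((i : ℕ) : ℤ) - ((j : ℕ) : ℤ)).natAbs → A⁻¹ i j < 0) ∧
      (Even (((i : ℕ) : ℤ) - ((j : ℕ) : ℤ)).natAbs → 0 < A⁻¹ i j) := by
  intro n
  induction n with
  | zero => intro A _ _ _ i; exact i.elim0
  | succ n IH =>
    intro A hPD htri hoff
    have hsymm : ∀ i j, A j i = A i j := by
      intro i j
      have := congrFun (congrFun hPD.1 i) j
      simpa [Matrix.conjTranspose_apply] using this
    set B : Matrix (Fin n) (Fin n) ℝ := A.submatrix Fin.castSucc Fin.castSucc with hB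
    have hBapp : ∀ i j, B i j = A i.castSucc j.castSucc := fun i j => rfl
    have hBPD : B.PosDef := by
      refine Matrix.PosDef.of_dotProduct_mulVec_pos ?_ ?_
      · ext i j
        simp [hB, Matrix.conjTranspose_apply, hsymm]
      · intro x hx
        have hy : (Fin.snoc x 0 : Fin (n + 1) → ℝ) ≠ 0 := by
          intro h
          apply hx
          ext k
          have := congrFun h k.castSucc
          simpa using this
        have h2 := hPD.dotProduct_mulVec_pos hy
        rw [show (star (Fin.snoc x 0 : Fin (n+1) → ℝ)) = Fin.snoc x 0 from star_trivial _] at h2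
        have hmv : ∀ i : Fin n, (A *ᵥ (Fin.snoc x 0 : Fin (n+1) → ℝ)) i.castSucc = (B *ᵥ x) i := by
          intro i
          simp [Matrix.mulVec, dotProduct, Fin.sum_univ_castSucc, hBapp]
        rw [show star x = x from star_trivial _]
        calc (0:ℝ) < Fin.snoc x 0 ⬝ᵥ (A *ᵥ Fin.snoc x 0) := h2
          _ = x ⬝ᵥ (B *ᵥ x) := by
              rw [dotProduct, dotProduct, Fin.sum_univ_castSucc]
              simp [hmv]
    have hBunit : IsUnit B.det := hBPD.det_pos.ne'.isUnit
    have hB1 : B * B⁻¹ = 1 := Matrix.mul_nonsing_inv B hBunit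
    have hBinvsymm : ∀ i j, B⁻¹ i j = B⁻¹ j i := by
      intro i j
      have hBt : Bᵀ = B := by
        ext i j; simp [hB, hsymm]
      have : B⁻¹ᵀ = B⁻¹ := by rw [Matrix.transpose_nonsing_inv, hBt]
      exact congrFun (congrFun this j) i
    set c : Fin n → ℝ := fun i => A i.castSucc (Fin.last n) with hc
    have hcapp : ∀ k, c k = A k.castSucc (Fin.last n) := fun _ => rfl
    set u : Fin n → ℝ := fun i => ∑ k, B⁻¹ i k * c k with hu
    set s : ℝ := A (Fin.last n) (Fin.last n) - ∑ k, c k * u k with hs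
    have hone : ∀ i l : Fin n, ∑ k, B i k * B⁻¹ k l = if i = l then 1 else 0 := by
      intro i l
      have := congrFun (congrFun hB1 i) l
      rw [Matrix.mul_apply] at this
      rw [this, Matrix.one_apply]
    have hBu : ∀ i, ∑ k, B i k * u k = c i := by
      intro i
      calc ∑ k, B i k * u k = ∑ k, ∑ l, B i k * (B⁻¹ k l * c l) := by
            simp [hu, Finset.mul_sum]
        _ = ∑ l, ∑ k, B i k * (B⁻¹ k l * c l) := Finset.sum_comm
        _ = ∑ l, (∑ k, B i k * B⁻¹ k l) * c l := by
            congr 1; ext l; rw [Finset.sum_mul]; congr 1; ext k; ring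
        _ = c i := by simp [hone]
    have hcB : ∀ j, ∑ k, c k * B⁻¹ k j = u j := by
      intro j
      rw [hu]
      congr 1; ext k
      rw [hBinvsymm k j]; ring
    -- positivity of the Schur complement
    have hspos : 0 < s := by
      set v : Fin (n + 1) → ℝ := Fin.snoc u (-1) with hv
      have hvne : v ≠ 0 := by
        intro h
        have := congrFun h (Fin.last n)
        simp [hv] at this
      have h2 := hPD.dotProduct_mulVec_pos hvne
      rw [show star v = v from star_trivial _] at h2
      have hmv1 : ∀ i : Fin n, (A *ᵥ v) i.castSucc = 0 := by
        intro i
        have : (A *ᵥ v) i.castSucc = (∑ k, B i k * u k) - c i := by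
          simp [Matrix.mulVec, dotProduct, Fin.sum_univ_castSucc, hv, hBapp, hc]
          ring
        rw [this, hBu]; ring
      have hmv2 : (A *ᵥ v) (Fin.last n) = -s := by
        have h3 : (A *ᵥ v) (Fin.last n)
            = ∑ k, A (Fin.last n) k.castSucc * u k + A (Fin.last n) (Fin.last n) * (-1) := by
          simp [Matrix.mulVec, dotProduct, Fin.sum_univ_castSucc, hv]
        have h4 : ∑ k, A (Fin.last n) k.castSucc * u k = ∑ k, c k * u k := by
          refine Finset.sum_congr rfl fun k _ => ?_
          rw [hsymm, ← hcapp k]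
        rw [h3, h4, hs]; ring
      have : v ⬝ᵥ (A *ᵥ v) = s := by
        rw [dotProduct, Fin.sum_univ_castSucc]
        simp only [hmv1, hmv2]
        simp [hv]
      linarith [h2, this ▸ h2]
    have hsne : s ≠ 0 := hspos.ne'
    -- the explicit inverse
    set M : Matrix (Fin (n + 1)) (Fin (n + 1)) ℝ := Matrix.of fun i j =>
      Fin.lastCases
        (Fin.lastCases (1 / s) (fun j' => -u j' / s) j)
        (fun i' => Fin.lastCases (-u i' / s) (fun j' => B⁻¹ i' j' + u i' * u j' / s) j) i
      with hM
    have hMcc : ∀ i j : Fin n, M i.castSucc j.castSucc = B⁻¹ i j + u i * u j / s := by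
      intro i j; simp [hM]
    have hMcl : ∀ i : Fin n, M i.castSucc (Fin.last n) = -u i / s := by
      intro i; simp [hM]
    have hMlc : ∀ j : Fin n, M (Fin.last n) j.castSucc = -u j / s := by
      intro j; simp [hM]
    have hMll : M (Fin.last n) (Fin.last n) = 1 / s := by simp [hM]
    have hAM : A * M = 1 := by
      ext i j
      rw [Matrix.mul_apply, Fin.sum_univ_castSucc]
      induction i using Fin.lastCases with
      | last =>
        induction j using Fin.lastCases with
        | last =>
          rw [hMll]
          have h1 : ∀ k : Fin n, A (Fin.last n) k.castSucc * M k.castSucc (Fin.last n)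
              = -(c k * u k) * (1/s) := by
            intro k
            rw [hMcl, hsymm, ← hcapp k]
            ring
          rw [Finset.sum_congr rfl fun k _ => h1 k, ← Finset.sum_mul]
          rw [Matrix.one_apply_eq]
          have h5 : ∑ k, -(c k * u k) = -∑ k, c k * u k := by
            rw [← Finset.sum_neg_distrib]
          rw [h5]
          have h6 : ∑ k, c k * u k = A (Fin.last n) (Fin.last n) - s := by rw [hs]; ring
          rw [h6]
          field_simp
          ring
        | cast j' =>
          rw [hMlc]
          have h1 : ∀ k : Fin n, A (Fin.last n) k.castSucc * M k.castSucc j'.castSucc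
              = c k * B⁻¹ k j' + c k * u k * (u j' / s) := by
            intro k
            rw [hMcc, hsymm, ← hcapp k]
            ring
          rw [Finset.sum_congr rfl fun k _ => h1 k, Finset.sum_add_distrib]
          have h5 : ∑ k, c k * u k * (u j' / s) = (∑ k, c k * u k) * (u j' / s) := by
            rw [Finset.sum_mul]
          rw [h5, hcB]
          have h6 : ∑ k, c k * u k = A (Fin.last n) (Fin.last n) - s := by rw [hs]; ring
          rw [h6]
          rw [Matrix.one_apply_ne (by simp [Fin.ext_iff]; omega)]
          field_simp
          ring
      | cast i' =>
        induction j using Fin.lastCases with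
        | last =>
          rw [hMll]
          have h1 : ∀ k : Fin n, A i'.castSucc k.castSucc * M k.castSucc (Fin.last n)
              = -(B i' k * u k) * (1/s) := by
            intro k
            rw [hMcl, ← hBapp]
            ring
          rw [Finset.sum_congr rfl fun k _ => h1 k]
          rw [Matrix.one_apply_ne (by simp [Fin.ext_iff]; omega)]
          have h5 : ∑ k, -(B i' k * u k) * (1/s) = -(∑ k, B i' k * u k) * (1/s) := by
            rw [← Finset.sum_mul, Finset.sum_neg_distrib]
          rw [h5, hBu, ← hcapp i']
          ring
        | cast j' =>
          rw [hMlc]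
          have h1 : ∀ k : Fin n, A i'.castSucc k.castSucc * M k.castSucc j'.castSucc
              = B i' k * B⁻¹ k j' + B i' k * u k * (u j' / s) := by
            intro k
            rw [hMcc, ← hBapp]
            ring
          rw [Finset.sum_congr rfl fun k _ => h1 k, Finset.sum_add_distrib, ← Finset.sum_mul,
            hBu, hone]
          have hone' : (1 : Matrix (Fin (n+1)) (Fin (n+1)) ℝ) i'.castSucc j'.castSucc
              = if i' = j' then 1 else 0 := by
            rw [Matrix.one_apply]
            simp [Fin.castSucc_inj]
          rw [hone', ← hcapp i']
          ring
    have hAinv : A⁻¹ = M := Matrix.inv_eq_right_inv hAM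
    -- signs of c
    have hc0 : ∀ k : Fin n, (k : ℕ) + 1 ≠ n → c k = 0 := by
      intro k hk
      apply htri
      have h1 : (k : ℕ) < n := k.isLt
      simp only [Fin.coe_castSucc, Fin.val_last]
      rw [abs_of_nonpos (by push_cast; omega)]
      push_cast; omega
    have hcpos : ∀ k : Fin n, (k : ℕ) + 1 = n → 0 < c k := by
      intro k hk
      apply hoff
      simp only [Fin.coe_castSucc, Fin.val_last]
      rw [abs_of_nonpos (by push_cast; omega)]
      push_cast; omega
    -- signs of B⁻¹ from the induction hypothesis
    have hIH := IH B hBPD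
      (fun i j h => htri i.castSucc j.castSucc (by simpa using h))
      (fun i j h => hoff i.castSucc j.castSucc (by simpa using h))
    -- signs of u
    have husign : ∀ i : Fin n,
        (Odd ((i : ℤ) - ((n : ℤ) - 1)) → u i < 0) ∧
        (Even ((i : ℤ) - ((n : ℤ) - 1)) → 0 < u i) := by
      intro i
      have hn : 0 < n := i.pos
      set m : Fin n := ⟨n - 1, by omega⟩ with hm
      have hsum : u i = B⁻¹ i m * c m := by
        rw [hu]
        apply Finset.sum_eq_single_of_mem m (Finset.mem_univ m)
        intro k _ hk
        rw [hc0 k (by simp [hm, Fin.ext_iff] at hk ⊢; omega), mul_zero]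
      have hcm : 0 < c m := hcpos m (by simp [hm]; omega)
      have hcast : ((m : ℕ) : ℤ) = (n : ℤ) - 1 := by simp [hm]; push_cast; omega
      constructor
      · intro hodd
        rw [hsum]
        have := (hIH i m).1 (by rw [Int.natAbs_odd, hcast]; exact hodd)
        exact mul_neg_of_neg_of_pos this hcm
      · intro heven
        rw [hsum]
        have := (hIH i m).2 (by rw [Int.natAbs_even, hcast]; exact heven)
        exact mul_pos this hcm
    -- conclusion
    intro i j
    induction i using Fin.lastCases with
    | last =>
      induction j using Fin.lastCases with
      | last =>
        rw [hAinv, hMll]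
        constructor
        · intro h; simp at h
        · intro _; positivity
      | cast j' =>
        rw [hAinv, hMlc]
        simp only [Fin.val_last, Fin.coe_castSucc]
        constructor
        · intro hodd
          rw [Int.natAbs_odd] at hodd
          have he : Even ((j' : ℤ) - ((n : ℤ) - 1)) := by
            rw [Int.even_iff]; rw [Int.odd_iff] at hodd; omega
          have := (husign j').2 he
          have : -u j' < 0 := by linarith
          exact div_neg_of_neg_of_pos this hspos
        · intro heven
          rw [Int.natAbs_even] at heven
          have ho : Odd ((j' : ℤ) - ((n : ℤ) - 1)) := by
            rw [Int.odd_iff]; rw [Int.even_iff] at heven; omega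
          have := (husign j').1 ho
          have : 0 < -u j' := by linarith
          exact div_pos this hspos
    | cast i' =>
      induction j using Fin.lastCases with
      | last =>
        rw [hAinv, hMcl]
        simp only [Fin.val_last, Fin.coe_castSucc]
        constructor
        · intro hodd
          rw [Int.natAbs_odd] at hodd
          have he : Even ((i' : ℤ) - ((n : ℤ) - 1)) := by
            rw [Int.even_iff]; rw [Int.odd_iff] at hodd; omega
          have := (husign i').2 he
          have : -u i' < 0 := by linarith
          exact div_neg_of_neg_of_pos this hspos
        · intro heven
          rw [Int.natAbs_even] at heven
          have ho : Odd ((i' : ℤ) - ((n : ℤ) - 1)) := by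
            rw [Int.odd_iff]; rw [Int.even_iff] at heven; omega
          have := (husign i').1 ho
          have : 0 < -u i' := by linarith
          exact div_pos this hspos
      | cast j' =>
        rw [hAinv, hMcc]
        simp only [Fin.coe_castSucc]
        constructor
        · intro hodd
          have hBneg := (hIH i' j').1 hodd
          rw [Int.natAbs_odd] at hodd
          have hprod : u i' * u j' < 0 := by
            rcases Int.even_or_odd ((i' : ℤ) - ((n : ℤ) - 1)) with he | ho
            · have ho' : Odd ((j' : ℤ) - ((n : ℤ) - 1)) := by
                rw [Int.odd_iff]; rw [Int.even_iff] at he; rw [Int.odd_iff] at hodd; omega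
              exact mul_neg_of_pos_of_neg ((husign i').2 he) ((husign j').1 ho')
            · have he' : Even ((j' : ℤ) - ((n : ℤ) - 1)) := by
                rw [Int.even_iff]; rw [Int.odd_iff] at ho hodd; omega
              exact mul_neg_of_neg_of_pos ((husign i').1 ho) ((husign j').2 he')
          have : u i' * u j' / s < 0 := div_neg_of_neg_of_pos hprod hspos
          linarith
        · intro heven
          have hBpos := (hIH i' j').2 heven
          rw [Int.natAbs_even] at heven
          have hprod : 0 < u i' * u j' := by
            rcases Int.even_or_odd ((i' : ℤ) - ((n : ℤ) - 1)) with he | ho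
            · have he' : Even ((j' : ℤ) - ((n : ℤ) - 1)) := by
                rw [Int.even_iff] at he ⊢; rw [Int.even_iff] at heven; omega
              exact mul_pos ((husign i').2 he) ((husign j').2 he')
            · have ho' : Odd ((j' : ℤ) - ((n : ℤ) - 1)) := by
                rw [Int.odd_iff] at ho ⊢; rw [Int.even_iff] at heven; omega
              exact mul_pos_of_neg_of_neg ((husign i').1 ho) ((husign j').1 ho')
          have : 0 < u i' * u j' / s := div_pos hprod hspos
          linarith


/-- For a symmetric positive definite tridiagonal matrix with strictly positive
off-diagonal entries (`A_{i,i+1} = -b_{i+1}` with `b_{i+1} < 0`), the entries of the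
inverse satisfy `(A⁻¹)_{ij} < 0` when `|i-j|` is odd and `(A⁻¹)_{ij} > 0` when
`|i-j|` is even. -/
theorem stmt6 (n : ℕ) (A : Matrix (Fin n) (Fin n) ℝ) (hPD : A.PosDef)
    (htri : ∀ i j : Fin n, 1 < |((i : ℕ) : ℤ) - ((j : ℕ) : ℤ)| → A i j = 0)
    (hoff : ∀ i j : Fin n, |((i : ℕ) : ℤ) - ((j : ℕ) : ℤ)| = 1 → 0 < A i j) :
    ∀ i j : Fin n,
      (Odd (((i : ℕ) : ℤ) - ((j : ℕ) : ℤ)).natAbs → A⁻¹ i j < 0) ∧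
      (Even (((i : ℕ) : ℤ) - ((j : ℕ) : ℤ)).natAbs → 0 < A⁻¹ i j) := by
  exact key n A hPD htri hoff
end

section
/- Let P be an n×n symmetric positive definite matrix and σ² > 0. The function r ↦ log det(σ² Q(r)^{-1}) with Q(r) = r_0 I_n + Σ_{i=1}^{n-1} r_i Q_i + σ² P^{-1}, where Q_i is the symmetric 0-1 matrix with (j,l)-entry 1 iff |j-l| = i, is strictly convex on the set of r ∈ ℝ^n for which Q(r) is positive definite. -/
open Matrix

open Finset in
variable {n : ℕ}

lemma posDef_smul {A : Matrix (Fin n) (Fin n) ℝ} (hA : A.PosDef) {t : ℝ} (ht : 0 < t) :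
    (t • A).PosDef := by
  refine posDef_iff_dotProduct_mulVec.mpr ⟨?_, fun x hx => ?_⟩
  · unfold Matrix.IsHermitian
    rw [conjTranspose_smul, hA.1]
    simp
  · rw [smul_mulVec, dotProduct_smul]
    exact mul_pos ht (hA.dotProduct_mulVec_pos hx)
open Matrix Finset

variable {n : ℕ}

open scoped MatrixOrder

lemma logdet_strict {A B : Matrix (Fin n) (Fin n) ℝ} (hA : A.PosDef) (hB : B.PosDef)
    (hne : A ≠ B) {t s : ℝ} (ht : 0 < t) (hs : 0 < s) (hts : t + s = 1) :
    t * Real.log A.det + s * Real.log B.det < Real.log (t • A + s • B).det := by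
  classical
  set S := CFC.sqrt A with hSdef
  have hSS : S * S = A := CFC.sqrt_mul_sqrt_self A hA.posSemidef.nonneg
  have hSH : S.IsHermitian := (CFC.sqrt_nonneg A).posSemidef.1
  have hdetS : S.det * S.det = A.det := by rw [← det_mul, hSS]
  have hdetSne : S.det ≠ 0 := by
    intro h
    rw [h, mul_zero] at hdetS
    exact hA.det_pos.ne hdetS
  have hSunit : IsUnit S.det := hdetSne.isUnit
  have hTH : S⁻¹.IsHermitian := by
    unfold Matrix.IsHermitian
    rw [conjTranspose_nonsing_inv, hSH]
  set M := S⁻¹ * B * S⁻¹ with hMdef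
  have hMpsd : M.PosSemidef := by
    have := hB.posSemidef.conjTranspose_mul_mul_same S⁻¹
    rwa [hTH] at this
  have hMH : M.IsHermitian := hMpsd.1
  have hdetT : S⁻¹.det = S.det⁻¹ := by rw [det_nonsing_inv, Ring.inverse_eq_inv]
  have hdetM : M.det = B.det / A.det := by
    rw [hMdef, det_mul, det_mul, hdetT]
    field_simp [← hdetS]
    rw [← hdetS]; ring
  have hdetMpos : 0 < M.det := by
    rw [hdetM]; exact div_pos hB.det_pos hA.det_pos
  -- S * M * S = B
  have hSMS : S * M * S = B := by
    rw [hMdef]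
    rw [show S * (S⁻¹ * B * S⁻¹) * S = (S * S⁻¹) * B * (S⁻¹ * S) by noncomm_ring,
      mul_nonsing_inv _ hSunit, nonsing_inv_mul _ hSunit, one_mul, mul_one]
  -- key identity
  have hkey : t • A + s • B = S * (t • 1 + s • M) * S := by
    rw [mul_add, add_mul, mul_smul_comm, smul_mul_assoc, mul_smul_comm, smul_mul_assoc,
      mul_one, hSS, hSMS]
  -- eigenvalues
  set μ := hMH.eigenvalues with hμdef
  have hprodμ : M.det = ∏ i, μ i := by
    have := hMH.det_eq_prod_eigenvalues
    simpa using this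
  have hμpos : ∀ i, 0 < μ i := by
    intro i
    rcases lt_or_eq_of_le (hMpsd.eigenvalues_nonneg i) with h | h
    · exact h
    · exfalso
      have : M.det = 0 := by
        rw [hprodμ]
        exact Finset.prod_eq_zero (mem_univ i) h.symm
      exact hdetMpos.ne' this
  -- spectral decomposition of t•1 + s•M
  set U : Matrix (Fin n) (Fin n) ℝ := (hMH.eigenvectorUnitary : Matrix (Fin n) (Fin n) ℝ) with hUdef
  have hUmem := hMH.eigenvectorUnitary.2
  have hUU : U * star U = 1 := Matrix.mem_unitaryGroup_iff.mp hUmem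
  have hspec : M = U * diagonal μ * star U := by
    have := hMH.spectral_theorem
    simpa using this
  have hcomb : t • (1 : Matrix (Fin n) (Fin n) ℝ) + s • M
      = U * diagonal (fun i => t + s * μ i) * star U := by
    have h1 : (1 : Matrix (Fin n) (Fin n) ℝ) = U * 1 * star U := by
      rw [mul_one, hUU]
    calc t • (1 : Matrix (Fin n) (Fin n) ℝ) + s • M
        = U * (t • 1 + s • diagonal μ) * star U := by
          rw [mul_add, add_mul, mul_smul_comm, smul_mul_assoc, mul_smul_comm, smul_mul_assoc,
            ← h1, ← hspec]
      _ = U * diagonal (fun i => t + s * μ i) * star U := by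
          congr 1
          rw [← diagonal_one, ← diagonal_smul, ← diagonal_smul, diagonal_add]
          congr 1
          funext i
          simp
  have hdetU : U.det * (star U).det = 1 := by rw [← det_mul, hUU, det_one]
  have hdetcomb : (t • (1 : Matrix (Fin n) (Fin n) ℝ) + s • M).det
      = ∏ i, (t + s * μ i) := by
    rw [hcomb, det_mul, det_mul, det_diagonal]
    rw [show U.det * (∏ i, (t + s * μ i)) * (star U).det
        = (U.det * (star U).det) * ∏ i, (t + s * μ i) by ring, hdetU, one_mul]
  have hdet : (t • A + s • B).det = A.det * ∏ i, (t + s * μ i) := by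
    rw [hkey, det_mul, det_mul, hdetcomb]
    rw [show S.det * (∏ i, (t + s * μ i)) * S.det = (S.det * S.det) * ∏ i, (t + s * μ i) by ring,
      hdetS]
  -- some eigenvalue ≠ 1
  have hexists : ∃ i, μ i ≠ 1 := by
    by_contra h
    push_neg at h
    have hM1 : M = 1 := by
      rw [hspec]
      have : diagonal μ = 1 := by
        rw [show μ = fun _ => (1:ℝ) from funext h]
        exact diagonal_one
      rw [this, mul_one, hUU]
    apply hne
    rw [← hSMS, hM1, mul_one, hSS]
  obtain ⟨i₀, hi₀⟩ := hexists
  -- per-term bounds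
  have hterm_le : ∀ i ∈ univ, s * Real.log (μ i) ≤ Real.log (t + s * μ i) := by
    intro i _
    have := strictConcaveOn_log_Ioi.concaveOn.2 (Set.mem_Ioi.mpr one_pos)
      (Set.mem_Ioi.mpr (hμpos i)) ht.le hs.le hts
    simpa [Real.log_one] using this
  have hterm_lt : s * Real.log (μ i₀) < Real.log (t + s * μ i₀) := by
    have := strictConcaveOn_log_Ioi.2 (Set.mem_Ioi.mpr one_pos)
      (Set.mem_Ioi.mpr (hμpos i₀)) (Ne.symm hi₀) ht hs hts
    simpa [Real.log_one] using this
  have hsum : ∑ i, s * Real.log (μ i) < ∑ i, Real.log (t + s * μ i) :=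
    Finset.sum_lt_sum hterm_le ⟨i₀, mem_univ i₀, hterm_lt⟩
  -- assemble
  have hlogB : Real.log B.det = Real.log A.det + ∑ i, Real.log (μ i) := by
    have h1 : B.det = A.det * M.det := by
      rw [hdetM, mul_comm, div_mul_cancel₀ _ hA.det_pos.ne']
    rw [h1, Real.log_mul hA.det_pos.ne' hdetMpos.ne', hprodμ,
      Real.log_prod (fun i _ => (hμpos i).ne')]
  have hlogC : Real.log (t • A + s • B).det
      = Real.log A.det + ∑ i, Real.log (t + s * μ i) := by
    have hpos : ∀ i ∈ univ, (t + s * μ i) ≠ 0 :=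
      fun i _ => (add_pos ht (mul_pos hs (hμpos i))).ne'
    rw [hdet, Real.log_mul hA.det_pos.ne' (Finset.prod_ne_zero_iff.mpr hpos),
      Real.log_prod hpos]
  rw [hlogB, hlogC]
  have : t * Real.log A.det + s * (Real.log A.det + ∑ i, Real.log (μ i))
      = Real.log A.det + ∑ i, s * Real.log (μ i) := by
    rw [mul_add, Finset.mul_sum]
    linear_combination Real.log A.det * hts
  rw [this]
  linarith

open Matrix Finset

/-- The function `r ↦ log det(σ² Q(r)⁻¹)` with
`Q(r) = r_0 I + ∑_{i=1}^{n-1} r_i Q_i + σ² P⁻¹` (note `Q_0 = I`) is strictly convex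
on the set of `r` for which `Q(r)` is positive definite. -/
theorem stmt7 (n : ℕ) (hn : 0 < n)
    (P : Matrix (Fin n) (Fin n) ℝ) (hP : P.PosDef)
    (σ2 : ℝ) (hσ : 0 < σ2)
    (Qi : Fin n → Matrix (Fin n) (Fin n) ℝ)
    (hQi : ∀ i j l : Fin n,
      Qi i j l = if |((j : ℕ) : ℤ) - ((l : ℕ) : ℤ)| = ((i : ℕ) : ℤ) then 1 else 0)
    (Q : (Fin n → ℝ) → Matrix (Fin n) (Fin n) ℝ)
    (hQ : ∀ r : Fin n → ℝ, Q r = ∑ i : Fin n, r i • Qi i + σ2 • P⁻¹) :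
    StrictConvexOn ℝ {r : Fin n → ℝ | (Q r).PosDef}
      (fun r => Real.log ((σ2 • (Q r)⁻¹).det)) := by
  classical
  set i0 : Fin n := ⟨0, hn⟩ with hi0
  -- value of first row of Q r
  have hrow : ∀ (r : Fin n → ℝ) (l : Fin n), Q r i0 l = r l + σ2 * P⁻¹ i0 l := by
    intro r l
    rw [hQ]
    have hcond : ∀ k : Fin n, (|((i0 : ℕ) : ℤ) - ((l : ℕ) : ℤ)| = ((k : ℕ) : ℤ)) ↔ k = l := by
      intro k
      simp only [hi0]
      rw [show (((⟨0, hn⟩ : Fin n) : ℕ) : ℤ) = 0 from rfl, zero_sub, abs_neg,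
        abs_of_nonneg (by positivity : (0:ℤ) ≤ ((l:ℕ):ℤ))]
      constructor
      · intro h; exact Fin.ext (by exact_mod_cast h.symm)
      · intro h; rw [h]
    simp only [Matrix.add_apply, Matrix.smul_apply, Matrix.sum_apply, hQi, smul_eq_mul]
    rw [Finset.sum_congr rfl (fun k _ => by rw [show (if |((i0 : ℕ) : ℤ) - ((l : ℕ) : ℤ)| = ((k : ℕ) : ℤ) then (1:ℝ) else 0) = if k = l then (1:ℝ) else 0 from by simp only [hcond k]])]
    simp [Finset.sum_ite_eq]
  -- Q is injective
  have hinj : ∀ r r' : Fin n → ℝ, Q r = Q r' → r = r' := by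
    intro r r' h
    funext l
    have := congrArg (fun A : Matrix (Fin n) (Fin n) ℝ => A i0 l) h
    simp only [hrow] at this
    linarith
  -- affinity
  have haff : ∀ (x y : Fin n → ℝ) (t s : ℝ), t + s = 1 →
      Q (t • x + s • y) = t • Q x + s • Q y := by
    intro x y t s hts
    rw [hQ, hQ, hQ]
    ext j l
    simp only [Matrix.add_apply, Matrix.smul_apply, Matrix.sum_apply, Pi.add_apply,
      Pi.smul_apply, smul_eq_mul]
    rw [Finset.sum_congr rfl (fun k _ => by
      show (t * x k + s * y k) * Qi k j l = t * (x k * Qi k j l) + s * (y k * Qi k j l)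
      ring), Finset.sum_add_distrib]
    rw [mul_add, mul_add, Finset.mul_sum, Finset.mul_sum]
    linear_combination (-(σ2 * P⁻¹ j l)) * hts
  constructor
  · -- convexity of the set
    intro x hx y hy t s ht hs hts
    simp only [Set.mem_setOf_eq] at *
    rcases eq_or_lt_of_le ht with h0 | ht'
    · have hs1 : s = 1 := by linarith
      have : t • x + s • y = y := by rw [← h0, hs1]; simp
      rwa [this]
    rcases eq_or_lt_of_le hs with h0 | hs'
    · have ht1 : t = 1 := by linarith
      have : t • x + s • y = x := by rw [← h0, ht1]; simp
      rwa [this]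
    rw [haff x y t s hts]
    exact (posDef_smul hx ht').add (posDef_smul hy hs')
  · intro x hx y hy hxy t s ht hs hts
    simp only [Set.mem_setOf_eq] at hx hy
    have hmem : (Q (t • x + s • y)).PosDef := by
      rw [haff x y t s hts]
      exact (posDef_smul hx ht).add (posDef_smul hy hs)
    -- rewrite f
    have hf : ∀ (r : Fin n → ℝ), (Q r).PosDef →
        Real.log ((σ2 • (Q r)⁻¹).det) = n * Real.log σ2 - Real.log (Q r).det := by
      intro r hr
      rw [Matrix.det_smul, Matrix.det_nonsing_inv, Ring.inverse_eq_inv, Fintype.card_fin,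
        Real.log_mul (pow_ne_zero _ hσ.ne') (inv_ne_zero hr.det_pos.ne'),
        Real.log_pow, Real.log_inv]
      ring
    simp only [hf _ hx, hf _ hy, hf _ hmem]
    have hQne : Q x ≠ Q y := fun h => hxy (hinj x y h)
    have hkey := logdet_strict hx hy hQne ht hs hts
    rw [haff x y t s hts]
    simp only [smul_eq_mul]
    have hc : t * ((n:ℝ) * Real.log σ2 - Real.log (Q x).det)
        + s * ((n:ℝ) * Real.log σ2 - Real.log (Q y).det)
        = (n:ℝ) * Real.log σ2 - (t * Real.log (Q x).det + s * Real.log (Q y).det) := by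
      linear_combination ((n:ℝ) * Real.log σ2) * hts
    linarith [hkey, hc]
end

section
/- The image of the sphere 𝒰 = {u ∈ ℝ^N : u^T u = ℰ} under the quadratic map f(u) = (u^T L_0 u, ..., u^T L_{n-1} u), with L_j = (C^j + (C^j)^T)/2 for the cyclic permutation matrix C, is a convex polytope in ℝ^n; specifically, it is the convex hull of finitely many points. -/
open Matrix

section Stmt13Aux
open Complex Finset

noncomputable def zet (N : ℕ) : ℂ := Complex.exp (2 * Real.pi / N * Complex.I)

lemma zet_zpow (N : ℕ) (m : ℤ) :
    zet N ^ m = Complex.exp (m * (2 * Real.pi / N * Complex.I)) := by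
  rw [Complex.exp_int_mul, zet]

lemma zet_zpow_eq_one_iff (N : ℕ) (hN : 0 < N) (m : ℤ) :
    zet N ^ m = 1 ↔ (N : ℤ) ∣ m := by
  rw [zet_zpow, Complex.exp_eq_one_iff]
  have hπ : (Real.pi : ℂ) ≠ 0 := by exact_mod_cast Real.pi_ne_zero
  have hNc : (N : ℂ) ≠ 0 := by exact_mod_cast hN.ne'
  have hI : Complex.I ≠ 0 := Complex.I_ne_zero
  have h2 : (2 : ℂ) * Real.pi * Complex.I ≠ 0 := by simp [hπ, hI]
  constructor
  · rintro ⟨c, hc⟩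
    refine ⟨c, ?_⟩
    have : (m : ℂ) = N * c := by
      have h3 : (m : ℂ) * (2 * Real.pi * Complex.I) = (N * c) * (2 * Real.pi * Complex.I) := by
        field_simp at hc
        linear_combination (2 * Real.pi * Complex.I) * hc
      exact mul_right_cancel₀ h2 h3
    exact_mod_cast this
  · rintro ⟨c, rfl⟩
    exact ⟨c, by push_cast; field_simp⟩

lemma zet_ne_zero (N : ℕ) : zet N ≠ 0 := Complex.exp_ne_zero _

lemma zet_mod (N : ℕ) (hN : 0 < N) {a b : ℤ} (h : (N:ℤ) ∣ a - b) : zet N ^ a = zet N ^ b := by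
  have h1 : zet N ^ (a - b) = 1 := (zet_zpow_eq_one_iff N hN _).2 h
  have := zpow_sub₀ (zet_ne_zero N) a b
  rw [this] at h1
  have hb : zet N ^ b ≠ 0 := zpow_ne_zero _ (zet_ne_zero N)
  field_simp at h1
  exact h1

lemma zet_sum (N : ℕ) (hN : 0 < N) (m : ℤ) :
    ∑ k : Fin N, zet N ^ (m * (k : ℤ)) = if (N:ℤ) ∣ m then (N:ℂ) else 0 := by
  have hterm : ∀ k : Fin N, zet N ^ (m * (k:ℤ)) = (zet N ^ m) ^ (k : ℕ) := by
    intro k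
    rw [_root_.zpow_mul, ← zpow_natCast (zet N ^ m) (k:ℕ)]
  simp only [hterm]
  rw [Fin.sum_univ_eq_sum_range (fun k => (zet N ^ m) ^ k) N]
  split_ifs with h
  · have : zet N ^ m = 1 := (zet_zpow_eq_one_iff N hN m).2 h
    simp [this]
  · have hne : zet N ^ m ≠ 1 := fun hc => h ((zet_zpow_eq_one_iff N hN m).1 hc)
    rw [geom_sum_eq hne]
    have : (zet N ^ m) ^ N = 1 := by
      rw [← zpow_natCast (zet N ^ m) N, ← _root_.zpow_mul, mul_comm]
      exact (zet_zpow_eq_one_iff N hN _).2 ⟨m, rfl⟩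
    rw [this]
    simp

lemma zet_conj (N : ℕ) (m : ℤ) : (starRingEnd ℂ) (zet N ^ m) = zet N ^ (-m) := by
  have h : (starRingEnd ℂ) (zet N) = (zet N)⁻¹ := by
    rw [zet, ← Complex.exp_conj, ← Complex.exp_neg]
    congr 1
    simp only [_root_.map_mul, map_div₀, Complex.conj_I]
    rw [Complex.conj_ofReal, Complex.conj_natCast, Complex.conj_ofNat]
    ring
  rw [map_zpow₀, h, _root_.inv_zpow, ← _root_.zpow_neg (zet N)]

def sigF {N : ℕ} (hN : 0 < N) (i : Fin N) (m : ℕ) : Fin N :=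
  ⟨((i : ℕ) + m) % N, Nat.mod_lt _ hN⟩

def negF {N : ℕ} (hN : 0 < N) (k : Fin N) : Fin N :=
  ⟨(N - (k : ℕ)) % N, Nat.mod_lt _ hN⟩

lemma sigF_zero {N : ℕ} (hN : 0 < N) (i : Fin N) : sigF hN i 0 = i := by
  simp [sigF, Nat.mod_eq_of_lt i.isLt]

lemma int_eq_of_dvd {N : ℕ} (hN : 0 < N) {a b : ℤ} (ha : 0 ≤ a) (ha' : a < N)
    (hb : 0 ≤ b) (hb' : b < N) (h : (N:ℤ) ∣ a - b) : a = b := by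
  obtain ⟨c, hc⟩ := h
  have hN' : (0:ℤ) < N := by exact_mod_cast hN
  have hc0 : c = 0 := by
    by_contra hc0
    rcases lt_or_gt_of_ne hc0 with h1 | h1
    · have : (N:ℤ) * c ≤ -N := by nlinarith
      omega
    · have : (N:ℤ) ≤ N * c := by nlinarith
      omega
  subst hc0
  omega

lemma sigF_dvd {N : ℕ} (hN : 0 < N) (i : Fin N) (m : ℕ) :
    (N:ℤ) ∣ ((i:ℤ) + m - (sigF hN i m : ℤ)) := by
  have := Nat.div_add_mod ((i:ℕ) + m) N
  have h2 : (N:ℤ) * ((((i:ℕ) + m) / N : ℕ) : ℤ) + ((((i:ℕ) + m) % N : ℕ) : ℤ) = (i:ℕ) + m := by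
    exact_mod_cast this
  refine ⟨(((i:ℕ) + m) / N : ℕ), ?_⟩
  simp only [sigF]
  omega

lemma cond1 {N : ℕ} (hN : 0 < N) (i i' : Fin N) (j : ℕ) :
    (N:ℤ) ∣ ((i:ℤ) - (i':ℤ) + j) ↔ i' = sigF hN i j := by
  constructor
  · intro h
    have h2 := sigF_dvd hN i j
    have h3 : (N:ℤ) ∣ ((i':ℤ) - (sigF hN i j : ℤ)) := by
      have := dvd_sub h2 h
      have e : (i':ℤ) - (sigF hN i j : ℤ) = ((i:ℤ) + j - (sigF hN i j : ℤ)) - ((i:ℤ) - (i':ℤ) + j) := by ring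
      rw [e]; exact this
    have := int_eq_of_dvd hN (by positivity) (by exact_mod_cast i'.isLt)
      (by positivity) (by exact_mod_cast (sigF hN i j).isLt) h3
    exact Fin.ext (by exact_mod_cast this)
  · rintro rfl
    have := sigF_dvd hN i j
    convert this using 1
    ring

lemma negF_dvd {N : ℕ} (hN : 0 < N) (k : Fin N) :
    (N:ℤ) ∣ ((negF hN k : ℤ) + k) := by
  rcases Nat.eq_zero_or_pos (k : ℕ) with h | h
  · refine ⟨0, ?_⟩
    simp [negF, h]
  · refine ⟨1, ?_⟩
    have hk := k.isLt
    have : (N - (k:ℕ)) % N = N - (k:ℕ) := Nat.mod_eq_of_lt (by omega)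
    simp only [negF, this]
    push_cast
    omega

lemma cond2 {N : ℕ} (hN : 0 < N) (k k' : Fin N) :
    (N:ℤ) ∣ ((k:ℤ) + (k':ℤ)) ↔ k = negF hN k' := by
  constructor
  · intro h
    have h2 := negF_dvd hN k'
    have h3 : (N:ℤ) ∣ ((k:ℤ) - (negF hN k' : ℤ)) := by
      have := dvd_sub h h2
      have e : (k:ℤ) - (negF hN k' : ℤ) = ((k:ℤ) + (k':ℤ)) - ((negF hN k' : ℤ) + k') := by ring
      rw [e]; exact this
    have := int_eq_of_dvd hN (by positivity) (by exact_mod_cast k.isLt)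
      (by positivity) (by exact_mod_cast (negF hN k').isLt) h3
    exact Fin.ext (by exact_mod_cast this)
  · rintro rfl
    exact negF_dvd hN k'

lemma negF_negF {N : ℕ} (hN : 0 < N) (k : Fin N) : negF hN (negF hN k) = k := by
  rcases Nat.eq_zero_or_pos (k : ℕ) with h | h
  · apply Fin.ext
    simp [negF, h, Nat.mod_self]
  · have hk := k.isLt
    have h1 : (N - (k:ℕ)) % N = N - (k:ℕ) := Nat.mod_eq_of_lt (by omega)
    apply Fin.ext
    simp only [negF, h1]
    have : N - (N - (k:ℕ)) = k := by omega
    rw [this, Nat.mod_eq_of_lt hk]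

lemma central {N : ℕ} (hN : 0 < N) (u : Fin N → ℝ) (j : ℕ) :
    ∑ k : Fin N, ((Complex.normSq (∑ i : Fin N, (u i : ℂ) * zet N ^ ((i:ℤ) * (k:ℤ)))) : ℂ)
        * zet N ^ ((j:ℤ) * (k:ℤ))
      = (N : ℂ) * ∑ i : Fin N, ((u i * u (sigF hN i j) : ℝ) : ℂ) := by
  set z : Fin N → ℂ := fun k => ∑ i : Fin N, (u i : ℂ) * zet N ^ ((i:ℤ) * (k:ℤ)) with hz
  have hconj : ∀ k : Fin N, (starRingEnd ℂ) (z k)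
      = ∑ i' : Fin N, (u i' : ℂ) * zet N ^ ((-(i':ℤ)) * (k:ℤ)) := by
    intro k
    rw [hz, map_sum]
    refine Finset.sum_congr rfl fun i' _ => ?_
    rw [_root_.map_mul, Complex.conj_ofReal, zet_conj, neg_mul]
  have h1 : ∀ k : Fin N, ((Complex.normSq (z k)) : ℂ) * zet N ^ ((j:ℤ) * (k:ℤ))
      = ∑ i : Fin N, ∑ i' : Fin N,
          (u i : ℂ) * (u i' : ℂ) * zet N ^ (((i:ℤ) - (i':ℤ) + (j:ℤ)) * (k:ℤ)) := by
    intro k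
    rw [← Complex.mul_conj, hconj k, hz]
    rw [Finset.sum_mul_sum, Finset.sum_mul]
    refine Finset.sum_congr rfl fun i _ => ?_
    rw [Finset.sum_mul]
    refine Finset.sum_congr rfl fun i' _ => ?_
    have he : ((i:ℤ) - (i':ℤ) + (j:ℤ)) * (k:ℤ)
        = (i:ℤ) * k + ((-(i':ℤ)) * k + (j:ℤ) * k) := by ring
    rw [he, zpow_add₀ (zet_ne_zero N), zpow_add₀ (zet_ne_zero N)]
    ring
  calc ∑ k : Fin N, ((Complex.normSq (z k)) : ℂ) * zet N ^ ((j:ℤ) * (k:ℤ))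
      = ∑ k : Fin N, ∑ i : Fin N, ∑ i' : Fin N,
          (u i : ℂ) * (u i' : ℂ) * zet N ^ (((i:ℤ) - (i':ℤ) + (j:ℤ)) * (k:ℤ)) :=
        Finset.sum_congr rfl fun k _ => h1 k
    _ = ∑ i : Fin N, ∑ i' : Fin N, ∑ k : Fin N,
          (u i : ℂ) * (u i' : ℂ) * zet N ^ (((i:ℤ) - (i':ℤ) + (j:ℤ)) * (k:ℤ)) := by
        rw [Finset.sum_comm]
        exact Finset.sum_congr rfl fun i _ => Finset.sum_comm
    _ = ∑ i : Fin N, ∑ i' : Fin N,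
          (u i : ℂ) * (u i' : ℂ) * (if (N:ℤ) ∣ ((i:ℤ) - (i':ℤ) + (j:ℤ)) then (N:ℂ) else 0) := by
        refine Finset.sum_congr rfl fun i _ => Finset.sum_congr rfl fun i' _ => ?_
        rw [← Finset.mul_sum, zet_sum N hN]
    _ = ∑ i : Fin N, ∑ i' : Fin N,
          (if i' = sigF hN i j then (u i : ℂ) * (u i' : ℂ) * (N:ℂ) else 0) := by
        refine Finset.sum_congr rfl fun i _ => Finset.sum_congr rfl fun i' _ => ?_
        rw [mul_ite, mul_zero]
        congr 1
        · exact propext (cond1 hN i i' j)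
    _ = ∑ i : Fin N, (u i : ℂ) * (u (sigF hN i j) : ℂ) * (N:ℂ) := by
        refine Finset.sum_congr rfl fun i _ => ?_
        rw [Finset.sum_ite_eq' Finset.univ (sigF hN i j)
          (fun i' => (u i : ℂ) * (u i' : ℂ) * (N:ℂ))]
        simp
    _ = (N : ℂ) * ∑ i : Fin N, ((u i * u (sigF hN i j) : ℝ) : ℂ) := by
        rw [Finset.mul_sum]
        refine Finset.sum_congr rfl fun i _ => ?_
        push_cast
        ring

lemma central_re {N : ℕ} (hN : 0 < N) (u : Fin N → ℝ) (j : ℕ) :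
    ∑ k : Fin N, Complex.normSq (∑ i : Fin N, (u i : ℂ) * zet N ^ ((i:ℤ) * (k:ℤ)))
        * (zet N ^ ((j:ℤ) * (k:ℤ))).re
      = (N : ℝ) * ∑ i : Fin N, u i * u (sigF hN i j) := by
  have h := congrArg Complex.re (central hN u j)
  simpa [Complex.re_sum, Complex.mul_re] using h

lemma fwd {N : ℕ} (hN : 0 < N) (E : ℝ) (hE : 0 < E) (u : Fin N → ℝ)
    (hu : ∑ i : Fin N, u i * u i = E) :
    ∃ t : Fin N → ℝ, (∀ k, 0 ≤ t k) ∧ (∑ k, t k = 1) ∧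
      ∀ j : ℕ, ∑ i : Fin N, u i * u (sigF hN i j)
        = ∑ k : Fin N, t k * (E * (zet N ^ ((j:ℤ) * (k:ℤ))).re) := by
  set q : Fin N → ℝ := fun k =>
    Complex.normSq (∑ i : Fin N, (u i : ℂ) * zet N ^ ((i:ℤ) * (k:ℤ))) with hq
  have hNR : (0:ℝ) < N := by exact_mod_cast hN
  have hsumq : ∑ k, q k = N * E := by
    have h := central_re hN u 0
    simp only [Nat.cast_zero, zero_mul, zpow_zero, Complex.one_re, mul_one] at h
    rw [h]
    simp only [sigF_zero hN]
    rw [hu]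
  refine ⟨fun k => q k / (N * E),
    fun k => div_nonneg (Complex.normSq_nonneg _) (by positivity), ?_, ?_⟩
  · rw [← Finset.sum_div, hsumq, div_self (by positivity)]
  · intro j
    have h := central_re hN u j
    have hstep : ∀ k : Fin N, q k / (N * E) * (E * (zet N ^ ((j:ℤ) * (k:ℤ))).re)
        = q k * (zet N ^ ((j:ℤ) * (k:ℤ))).re / N := by
      intro k
      field_simp
    rw [Finset.sum_congr rfl fun k _ => hstep k, ← Finset.sum_div, h]
    field_simp

lemma zet_neg_exp {N : ℕ} (hN : 0 < N) (m : ℤ) (k : Fin N) :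
    zet N ^ (m * ((negF hN k : Fin N) : ℤ)) = (starRingEnd ℂ) (zet N ^ (m * (k:ℤ))) := by
  rw [zet_conj]
  apply zet_mod N hN
  have h := (negF_dvd hN k).mul_left m
  have he : m * ((negF hN k : Fin N):ℤ) - -(m * (k:ℤ))
      = m * (((negF hN k : Fin N):ℤ) + (k:ℤ)) := by ring
  rw [he]
  exact h

lemma bwd {N : ℕ} (hN : 0 < N) (E : ℝ) (hE : 0 < E) (t : Fin N → ℝ)
    (ht0 : ∀ k, 0 ≤ t k) :
    ∃ u : Fin N → ℝ, ∀ j : ℕ, ∑ i : Fin N, u i * u (sigF hN i j)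
      = ∑ k : Fin N, t k * (E * (zet N ^ ((j:ℤ) * (k:ℤ))).re) := by
  have hNR : (0:ℝ) < N := by exact_mod_cast hN
  have hNC : (N:ℂ) ≠ 0 := by exact_mod_cast hN.ne'
  set t' : Fin N → ℝ := fun k => (t k + t (negF hN k)) / 2 with ht'
  have ht'0 : ∀ k, 0 ≤ t' k := fun k => by
    have h1 := ht0 k; have h2 := ht0 (negF hN k)
    simp only [ht']; linarith
  have ht'neg : ∀ k, t' (negF hN k) = t' k := fun k => by
    simp only [ht', negF_negF hN k]; ring
  set a : Fin N → ℝ := fun k => Real.sqrt (E * t' k / N) with ha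
  have ha0 : ∀ k, 0 ≤ a k := fun k => Real.sqrt_nonneg _
  have ha2 : ∀ k, (a k)^2 = E * t' k / N := fun k =>
    Real.sq_sqrt (div_nonneg (mul_nonneg hE.le (ht'0 k)) hNR.le)
  have haneg : ∀ k, a (negF hN k) = a k := fun k => by
    simp only [ha, ht'neg]
  set u : Fin N → ℝ := fun i => ∑ k : Fin N, a k * (zet N ^ ((i:ℤ) * (k:ℤ))).re with hu
  -- step A : the imaginary parts cancel
  have himzero : ∀ i : Fin N, ∑ k : Fin N, a k * (zet N ^ ((i:ℤ) * (k:ℤ))).im = 0 := by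
    intro i
    refine Finset.sum_involution (fun k _ => negF hN k) ?_ ?_ (fun k hk => Finset.mem_univ _)
      (fun k hk => negF_negF hN k)
    · intro k hk
      rw [haneg, zet_neg_exp hN, Complex.conj_im]
      ring
    · intro k hk hne
      intro hfix
      apply hne
      replace hfix : negF hN k = k := hfix
      have h1 := zet_neg_exp hN (i:ℤ) k
      rw [hfix] at h1
      have h2 : (zet N ^ ((i:ℤ) * (k:ℤ))).im = 0 := Complex.conj_eq_iff_im.mp h1.symm
      rw [h2, mul_zero]
  have hcast : ∀ i : Fin N, ((u i : ℝ) : ℂ) = ∑ k : Fin N, (a k : ℂ) * zet N ^ ((i:ℤ) * (k:ℤ)) := by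
    intro i
    apply Complex.ext
    · simp [hu, Complex.re_sum, Complex.mul_re]
    · simp only [Complex.ofReal_im, Complex.im_sum, Complex.mul_im, Complex.ofReal_re,
        Complex.ofReal_im, zero_mul, add_zero]
      exact (himzero i).symm
  -- step B : central computation
  have hsig : ∀ (j : ℕ) (i k' : Fin N), zet N ^ (((sigF hN i j : Fin N) : ℤ) * (k':ℤ))
      = zet N ^ ((i:ℤ) * (k':ℤ)) * zet N ^ ((j:ℤ) * (k':ℤ)) := by
    intro j i k'
    rw [← zpow_add₀ (zet_ne_zero N)]
    apply zet_mod N hN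
    have h := (sigF_dvd hN i j).mul_right (k':ℤ)
    have he : ((sigF hN i j : Fin N):ℤ) * (k':ℤ) - ((i:ℤ) * k' + (j:ℤ) * k')
        = -(((i:ℤ) + (j:ℤ) - ((sigF hN i j : Fin N):ℤ)) * (k':ℤ)) := by ring
    rw [he]
    exact Dvd.dvd.neg_right h
  have hcent : ∀ j : ℕ, ∑ i : Fin N, ((u i : ℝ):ℂ) * ((u (sigF hN i j) : ℝ):ℂ)
      = (E:ℂ) * ∑ k : Fin N, (t' k : ℂ) * zet N ^ ((j:ℤ) * (k:ℤ)) := by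
    intro j
    have hterm : ∀ i : Fin N, ((u i : ℝ):ℂ) * ((u (sigF hN i j) : ℝ):ℂ)
        = ∑ k : Fin N, ∑ k' : Fin N, (a k : ℂ) * (a k' : ℂ)
            * zet N ^ ((j:ℤ) * (k':ℤ)) * zet N ^ ((((k:ℤ) + (k':ℤ))) * (i:ℤ)) := by
      intro i
      rw [hcast, hcast, Finset.sum_mul_sum]
      refine Finset.sum_congr rfl fun k _ => Finset.sum_congr rfl fun k' _ => ?_
      rw [hsig j i k']
      rw [show ((k:ℤ) + (k':ℤ)) * (i:ℤ) = (i:ℤ) * (k:ℤ) + (i:ℤ) * (k':ℤ) by ring,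
        zpow_add₀ (zet_ne_zero N)]
      ring
    calc ∑ i : Fin N, ((u i : ℝ):ℂ) * ((u (sigF hN i j) : ℝ):ℂ)
        = ∑ i : Fin N, ∑ k : Fin N, ∑ k' : Fin N, (a k : ℂ) * (a k' : ℂ)
            * zet N ^ ((j:ℤ) * (k':ℤ)) * zet N ^ ((((k:ℤ) + (k':ℤ))) * (i:ℤ)) :=
          Finset.sum_congr rfl fun i _ => hterm i
      _ = ∑ k : Fin N, ∑ k' : Fin N, ∑ i : Fin N, (a k : ℂ) * (a k' : ℂ)
            * zet N ^ ((j:ℤ) * (k':ℤ)) * zet N ^ ((((k:ℤ) + (k':ℤ))) * (i:ℤ)) := by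
          rw [Finset.sum_comm]
          exact Finset.sum_congr rfl fun k _ => Finset.sum_comm
      _ = ∑ k : Fin N, ∑ k' : Fin N, (a k : ℂ) * (a k' : ℂ) * zet N ^ ((j:ℤ) * (k':ℤ))
            * (if (N:ℤ) ∣ ((k:ℤ) + (k':ℤ)) then (N:ℂ) else 0) := by
          refine Finset.sum_congr rfl fun k _ => Finset.sum_congr rfl fun k' _ => ?_
          rw [← Finset.mul_sum, zet_sum N hN]
      _ = ∑ k' : Fin N, ∑ k : Fin N, (if k = negF hN k' then
            (a k : ℂ) * (a k' : ℂ) * zet N ^ ((j:ℤ) * (k':ℤ)) * (N:ℂ) else 0) := by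
          rw [Finset.sum_comm]
          refine Finset.sum_congr rfl fun k' _ => Finset.sum_congr rfl fun k _ => ?_
          rw [mul_ite, mul_zero]
          congr 1
          exact propext (cond2 hN k k')
      _ = ∑ k' : Fin N, (a (negF hN k') : ℂ) * (a k' : ℂ) * zet N ^ ((j:ℤ) * (k':ℤ)) * (N:ℂ) := by
          refine Finset.sum_congr rfl fun k' _ => ?_
          rw [Finset.sum_ite_eq' Finset.univ (negF hN k')
            (fun k => (a k : ℂ) * (a k' : ℂ) * zet N ^ ((j:ℤ) * (k':ℤ)) * (N:ℂ))]
          simp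
      _ = (E:ℂ) * ∑ k : Fin N, (t' k : ℂ) * zet N ^ ((j:ℤ) * (k:ℤ)) := by
          rw [Finset.mul_sum]
          refine Finset.sum_congr rfl fun k _ => ?_
          rw [haneg k]
          have h1 : ((a k : ℂ)) * (a k) = ((E * t' k / N : ℝ) : ℂ) := by
            rw [← ha2 k]
            push_cast
            ring
          rw [h1]
          push_cast
          field_simp
  refine ⟨u, fun j => ?_⟩
  have h := congrArg Complex.re (hcent j)
  simp only [Complex.re_sum, Complex.mul_re, Complex.ofReal_re, Complex.ofReal_im,
    zero_mul, sub_zero, mul_zero] at h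
  -- h : ∑ i, u i * u (sigF hN i j) = E * ∑ k, t' k * (zet N ^ (j*k)).re  (roughly)
  have hswap : ∑ k : Fin N, t (negF hN k) * (zet N ^ ((j:ℤ) * (k:ℤ))).re
      = ∑ k : Fin N, t k * (zet N ^ ((j:ℤ) * (k:ℤ))).re := by
    have hbij := Fintype.sum_equiv
      (⟨negF hN, negF hN, negF_negF hN, negF_negF hN⟩ : Equiv (Fin N) (Fin N))
      (fun k => t (negF hN k) * (zet N ^ ((j:ℤ) * (k:ℤ))).re)
      (fun k => t k * (zet N ^ ((j:ℤ) * ((negF hN k : Fin N):ℤ))).re)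
      (fun k => by simp [negF_negF hN])
    rw [hbij]
    refine Finset.sum_congr rfl fun k _ => ?_
    simp only [zet_neg_exp hN, Complex.conj_re]
  have ht's : ∑ k : Fin N, t' k * (zet N ^ ((j:ℤ) * (k:ℤ))).re
      = ∑ k : Fin N, t k * (zet N ^ ((j:ℤ) * (k:ℤ))).re := by
    have hpt : ∀ k : Fin N, t' k * (zet N ^ ((j:ℤ) * (k:ℤ))).re
        = (t k * (zet N ^ ((j:ℤ) * (k:ℤ))).re
          + t (negF hN k) * (zet N ^ ((j:ℤ) * (k:ℤ))).re) / 2 := by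
      intro k
      simp only [ht']
      ring
    rw [Finset.sum_congr rfl fun k _ => hpt k, ← Finset.sum_div, Finset.sum_add_distrib,
      hswap]
    ring
  rw [h, ht's, Finset.mul_sum]
  exact Finset.sum_congr rfl fun k _ => by ring

lemma Cpow {N : ℕ} (hN : 0 < N) (C : Matrix (Fin N) (Fin N) ℝ)
    (hC : ∀ i j : Fin N, C i j = if (j : ℕ) = ((i : ℕ) + 1) % N then 1 else 0) (m : ℕ) :
    ∀ i i' : Fin N, (C ^ m) i i' = if (i' : ℕ) = ((i : ℕ) + m) % N then 1 else 0 := by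
  induction m with
  | zero =>
    intro i i'
    rw [pow_zero, Matrix.one_apply]
    have : ((i:ℕ) + 0) % N = (i:ℕ) := by
      rw [Nat.add_zero, Nat.mod_eq_of_lt i.isLt]
    rw [this]
    congr 1
    simp [Fin.ext_iff, eq_comm]
  | succ m ih =>
    intro i i'
    rw [pow_succ, Matrix.mul_apply]
    rw [Finset.sum_eq_single (sigF hN i m)]
    · rw [ih, hC]
      have h1 : ((sigF hN i m : Fin N) : ℕ) = ((i:ℕ) + m) % N := rfl
      rw [h1, if_pos rfl, one_mul]
      have h2 : (((i:ℕ) + m) % N + 1) % N = ((i:ℕ) + (m + 1)) % N := by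
        rw [Nat.mod_add_mod, Nat.add_assoc]
      rw [h2]
    · intro b _ hb
      rw [ih, if_neg, zero_mul]
      intro hb2
      exact hb (Fin.ext hb2)
    · intro h
      exact absurd (Finset.mem_univ _) h

lemma fval {N n : ℕ} (hN : 0 < N) (C : Matrix (Fin N) (Fin N) ℝ)
    (hC : ∀ i j : Fin N, C i j = if (j : ℕ) = ((i : ℕ) + 1) % N then 1 else 0)
    (L : Fin n → Matrix (Fin N) (Fin N) ℝ)
    (hL : ∀ j : Fin n, L j = (2 : ℝ)⁻¹ • (C ^ (j : ℕ) + (C ^ (j : ℕ))ᵀ))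
    (f : (Fin N → ℝ) → Fin n → ℝ)
    (hf : ∀ (u : Fin N → ℝ) (j : Fin n), f u j = u ⬝ᵥ (L j).mulVec u)
    (u : Fin N → ℝ) (j : Fin n) :
    f u j = ∑ i : Fin N, u i * u (sigF hN i (j : ℕ)) := by
  set A := C ^ (j : ℕ) with hA
  have hAval : ∀ i i' : Fin N, A i i' = if (i' : ℕ) = ((i : ℕ) + (j:ℕ)) % N then 1 else 0 := by
    rw [hA]; exact Cpow hN C hC (j : ℕ)
  have hsingle : ∀ i : Fin N, ∑ i' : Fin N, A i i' * u i' = u (sigF hN i (j:ℕ)) := by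
    intro i
    rw [Finset.sum_eq_single (sigF hN i (j:ℕ))]
    · rw [hAval]
      have h1 : ((sigF hN i (j:ℕ) : Fin N) : ℕ) = ((i:ℕ) + (j:ℕ)) % N := rfl
      rw [h1, if_pos rfl, one_mul]
    · intro b _ hb
      rw [hAval, if_neg, zero_mul]
      intro hb2
      exact hb (Fin.ext hb2)
    · intro h
      exact absurd (Finset.mem_univ _) h
  have hP : ∑ i : Fin N, ∑ i' : Fin N, u i * (A i i' * u i')
      = ∑ i : Fin N, u i * u (sigF hN i (j:ℕ)) := by
    refine Finset.sum_congr rfl fun i _ => ?_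
    rw [← Finset.mul_sum, hsingle i]
  have hQ : ∑ i : Fin N, ∑ i' : Fin N, u i * (A i' i * u i')
      = ∑ i : Fin N, u i * u (sigF hN i (j:ℕ)) := by
    rw [Finset.sum_comm]
    rw [← hP]
    exact Finset.sum_congr rfl fun i _ => Finset.sum_congr rfl fun i' _ => by ring
  rw [hf, hL]
  simp only [dotProduct, Matrix.mulVec, Matrix.smul_apply, Matrix.add_apply,
    Matrix.transpose_apply, smul_eq_mul, ← hA]
  calc ∑ i, u i * ∑ i', 2⁻¹ * (A i i' + A i' i) * u i'
      = ∑ i, ∑ i', 2⁻¹ * (u i * (A i i' * u i') + u i * (A i' i * u i')) := by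
        refine Finset.sum_congr rfl fun i _ => ?_
        rw [Finset.mul_sum]
        exact Finset.sum_congr rfl fun i' _ => by ring
    _ = 2⁻¹ * ((∑ i, ∑ i', u i * (A i i' * u i')) + ∑ i, ∑ i', u i * (A i' i * u i')) := by
        rw [mul_add, Finset.mul_sum, Finset.mul_sum, ← Finset.sum_add_distrib]
        refine Finset.sum_congr rfl fun i _ => ?_
        rw [Finset.mul_sum, Finset.mul_sum, ← Finset.sum_add_distrib]
        refine Finset.sum_congr rfl fun i' _ => by ring
    _ = ∑ i : Fin N, u i * u (sigF hN i (j:ℕ)) := by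
        rw [hP, hQ]
        ring

end Stmt13Aux

/-- The image of the sphere `{u : uᵀu = ℰ}` under the quadratic map
`f(u) = (uᵀL_0 u, ..., uᵀL_{n-1} u)`, with `L_j = (C^j + (C^j)ᵀ)/2` for the cyclic
permutation matrix `C`, is a convex polytope: the convex hull of finitely many
points. -/
theorem stmt13 (N n : ℕ) (hN : 0 < N) (hn : n ≤ N) (E : ℝ) (hE : 0 < E)
    (C : Matrix (Fin N) (Fin N) ℝ)
    (hC : ∀ i j : Fin N, C i j = if (j : ℕ) = ((i : ℕ) + 1) % N then 1 else 0)
    (L : Fin n → Matrix (Fin N) (Fin N) ℝ)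
    (hL : ∀ j : Fin n, L j = (2 : ℝ)⁻¹ • (C ^ (j : ℕ) + (C ^ (j : ℕ))ᵀ))
    (f : (Fin N → ℝ) → Fin n → ℝ)
    (hf : ∀ (u : Fin N → ℝ) (j : Fin n), f u j = u ⬝ᵥ (L j).mulVec u) :
    ∃ s : Finset (Fin n → ℝ),
      f '' {u : Fin N → ℝ | u ⬝ᵥ u = E} = convexHull ℝ (s : Set (Fin n → ℝ)) := by
  classical
  set p : Fin N → (Fin n → ℝ) :=
    fun k => fun j : Fin n => E * (zet N ^ (((j:ℕ):ℤ) * ((k:ℕ):ℤ))).re with hp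
  refine ⟨Finset.image p Finset.univ, ?_⟩
  have hdot : ∀ u : Fin N → ℝ, u ⬝ᵥ u = ∑ i, u i * u i := fun u => rfl
  apply Set.Subset.antisymm
  · rintro x ⟨u, hu, rfl⟩
    have hu' : ∑ i, u i * u i = E := by rw [← hdot]; exact hu
    obtain ⟨t, ht0, ht1, htf⟩ := fwd hN E hE u hu'
    have hx : f u = ∑ k : Fin N, t k • p k := by
      funext j
      rw [fval hN C hC L hL f hf u j, htf (j:ℕ)]
      rw [Finset.sum_apply]
      rfl
    rw [hx, ← Finset.centerMass_eq_of_sum_1 Finset.univ p ht1]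
    exact Finset.centerMass_mem_convexHull Finset.univ (fun k _ => ht0 k)
      (by rw [ht1]; norm_num)
      (fun k _ => by
        rw [Finset.coe_image]
        exact Set.mem_image_of_mem p (Finset.mem_coe.mpr (Finset.mem_univ k)))
  · intro x hx
    rw [_root_.convexHull_eq] at hx
    obtain ⟨ι, T, w, zf, hw0, hw1, hzs, hcm⟩ := hx
    have hzrange : ∀ i ∈ T, ∃ k : Fin N, p k = zf i := by
      intro i hi
      have := hzs i hi
      rw [Finset.coe_image] at this
      obtain ⟨k, _, hk⟩ := this
      exact ⟨k, hk⟩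
    set c : ι → Fin N := fun i =>
      if h : ∃ k : Fin N, p k = zf i then h.choose else ⟨0, hN⟩ with hc
    have hpc : ∀ i ∈ T, p (c i) = zf i := by
      intro i hi
      have h := hzrange i hi
      simp only [hc, dif_pos h]
      exact h.choose_spec
    set t : Fin N → ℝ := fun k => ∑ i ∈ T.filter (fun i => c i = k), w i with ht
    have ht0 : ∀ k, 0 ≤ t k := fun k =>
      Finset.sum_nonneg fun i hi => hw0 i (Finset.mem_of_mem_filter i hi)
    have ht1 : ∑ k, t k = 1 := by
      rw [ht]
      rw [Finset.sum_fiberwise T c w]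
      exact hw1
    obtain ⟨u, hu⟩ := bwd hN E hE t ht0
    have hkey : ∑ k : Fin N, t k • p k = x := by
      rw [← hcm, Finset.centerMass_eq_of_sum_1 T zf hw1]
      have : ∀ k : Fin N, t k • p k = ∑ i ∈ T.filter (fun i => c i = k), w i • zf i := by
        intro k
        rw [ht, Finset.sum_smul]
        refine Finset.sum_congr rfl fun i hi => ?_
        congr 1
        rw [← hpc i (Finset.mem_of_mem_filter i hi), (Finset.mem_filter.mp hi).2]
      rw [Finset.sum_congr rfl fun k _ => this k]
      exact Finset.sum_fiberwise T c (fun i => w i • zf i)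
    refine ⟨u, ?_, ?_⟩
    · rw [Set.mem_setOf_eq, hdot]
      have h0 := hu 0
      simp only [Nat.cast_zero, zero_mul, zpow_zero, Complex.one_re, mul_one,
        sigF_zero hN] at h0
      rw [h0, ← Finset.sum_mul, ht1, one_mul]
    · funext j
      rw [fval hN C hC L hL f hf u j, hu (j:ℕ), ← hkey]
      rw [Finset.sum_apply]
      rfl
end

section
/- Let N be even, ω = 2π/N, and ξ_j ∈ ℝ^N with k-th entry cos(kjω) (k = 0,...,N-1). Then the image of {u ∈ ℝ^N : u^T u = ℰ} under the map f with f_j(u) = Σ_{k=0}^{N-1} u_k u_{(k-j) mod N}, j = 0,...,n-1, equals the convex hull conv{ℰ ξ_0(1:n), ℰ ξ_1(1:n), ..., ℰ ξ_{N/2}(1:n)}, where ξ_j(1:n) denotes the first n entries of ξ_j. -/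
open Matrix Finset


private lemma geom_root_sum (N : ℕ) (c : ℂ) (hc : c ^ N = 1) :
    ∑ m ∈ Finset.range N, c ^ m = if c = 1 then (N : ℂ) else 0 := by
  split_ifs with h
  · simp [h]
  · rw [geom_sum_eq h, hc]; simp

private lemma cexp_sum (N : ℕ) (hN : 0 < N) (t : ℤ) :
    ∑ m ∈ Finset.range N, Complex.exp (((t * m * (2 * Real.pi / N) : ℝ) : ℂ) * Complex.I) =
      if (N:ℤ) ∣ t then (N : ℂ) else 0 := by
  have hN0 : (N:ℂ) ≠ 0 := by exact_mod_cast hN.ne'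
  set c : ℂ := Complex.exp (((t * (2 * Real.pi / N) : ℝ) : ℂ) * Complex.I) with hcdef
  have hcN : c ^ N = 1 := by
    rw [hcdef, ← Complex.exp_nat_mul]
    have he : (N:ℂ) * (((t * (2 * Real.pi / N) : ℝ) : ℂ) * Complex.I)
        = (t : ℤ) * (2 * (Real.pi:ℂ) * Complex.I) := by
      push_cast
      field_simp
    rw [he, Complex.exp_int_mul, Complex.exp_two_pi_mul_I, _root_.one_zpow]
  have hterm : ∀ m ∈ Finset.range N,
      Complex.exp (((t * m * (2 * Real.pi / N) : ℝ) : ℂ) * Complex.I) = c ^ m := by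
    intro m _
    rw [hcdef, ← Complex.exp_nat_mul]
    congr 1
    push_cast
    ring
  rw [Finset.sum_congr rfl hterm, geom_root_sum N c hcN]
  by_cases h : (N:ℤ) ∣ t
  · obtain ⟨s, rfl⟩ := h
    have hc1 : c = 1 := by
      rw [hcdef]
      have he : ((((N:ℤ)*s : ℤ) * (2 * Real.pi / N) : ℝ) : ℂ) * Complex.I
          = (s:ℤ) * (2 * (Real.pi:ℂ) * Complex.I) := by
        push_cast
        field_simp
      rw [he, Complex.exp_int_mul, Complex.exp_two_pi_mul_I, _root_.one_zpow]
    simp [hc1, Dvd.intro s rfl]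
  · have hc1 : c ≠ 1 := by
      intro hc1
      rw [hcdef, Complex.exp_eq_one_iff] at hc1
      obtain ⟨s, hs⟩ := hc1
      apply h
      have him := congrArg Complex.im hs
      simp [Complex.mul_im, Complex.mul_re] at him
      -- him : t * (2*π/N) = s * (2*π)  (roughly)
      have hNr : (N:ℝ) ≠ 0 := by exact_mod_cast hN.ne'
      have hpi := Real.pi_ne_zero
      have ht : (t:ℝ) = s * N := by
        field_simp at him
        nlinarith [him, Real.pi_pos]
      exact ⟨s, by exact_mod_cast (mul_comm (s:ℝ) (N:ℝ) ▸ ht)⟩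
    simp [hc1, h]

private lemma cos_sum (N : ℕ) (hN : 0 < N) (t : ℤ) :
    ∑ m ∈ Finset.range N, Real.cos (t * m * (2 * Real.pi / N)) =
      if (N:ℤ) ∣ t then (N : ℝ) else 0 := by
  have h := congrArg Complex.re (cexp_sum N hN t)
  rw [Complex.re_sum] at h
  simp only [Complex.exp_ofReal_mul_I_re] at h
  rw [h, apply_ite Complex.re]
  simp

private lemma sin_sum (N : ℕ) (hN : 0 < N) (t : ℤ) :
    ∑ m ∈ Finset.range N, Real.sin (t * m * (2 * Real.pi / N)) = 0 := by
  have h := congrArg Complex.im (cexp_sum N hN t)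
  rw [Complex.im_sum] at h
  simp only [Complex.exp_ofReal_mul_I_im] at h
  rw [h, apply_ite Complex.im]
  simp

-- product-sum lemmas with real arguments given as integer casts
private lemma cos_mul_cos_sum (N : ℕ) (hN : 0 < N) (x y : ℝ) (a b : ℤ)
    (hx : x = a) (hy : y = b) :
    ∑ m ∈ Finset.range N, Real.cos (x * m * (2*Real.pi/N)) * Real.cos (y * m * (2*Real.pi/N)) =
      ((if (N:ℤ) ∣ (a - b) then (N:ℝ) else 0) + (if (N:ℤ) ∣ (a + b) then (N:ℝ) else 0)) / 2 := by
  subst hx hy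
  have h : ∀ m ∈ Finset.range N,
      Real.cos ((a:ℝ) * m * (2*Real.pi/N)) * Real.cos ((b:ℝ) * m * (2*Real.pi/N))
      = (Real.cos (((a-b:ℤ):ℝ) * m * (2*Real.pi/N)) + Real.cos (((a+b:ℤ):ℝ) * m * (2*Real.pi/N))) / 2 := by
    intro m _
    have e1 : (((a-b:ℤ)):ℝ) * m * (2*Real.pi/N) = (a:ℝ)*m*(2*Real.pi/N) - (b:ℝ)*m*(2*Real.pi/N) := by
      push_cast; ring
    have e2 : (((a+b:ℤ)):ℝ) * m * (2*Real.pi/N) = (a:ℝ)*m*(2*Real.pi/N) + (b:ℝ)*m*(2*Real.pi/N) := by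
      push_cast; ring
    rw [e1, e2, Real.cos_sub, Real.cos_add]
    ring
  rw [Finset.sum_congr rfl h, ← Finset.sum_div, Finset.sum_add_distrib,
    cos_sum N hN (a-b), cos_sum N hN (a+b)]

private lemma cos_mul_sin_sum (N : ℕ) (hN : 0 < N) (x y : ℝ) (a b : ℤ)
    (hx : x = a) (hy : y = b) :
    ∑ m ∈ Finset.range N, Real.cos (x * m * (2*Real.pi/N)) * Real.sin (y * m * (2*Real.pi/N)) = 0 := by
  subst hx hy
  have h : ∀ m ∈ Finset.range N,
      Real.cos ((a:ℝ) * m * (2*Real.pi/N)) * Real.sin ((b:ℝ) * m * (2*Real.pi/N))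
      = (Real.sin (((a+b:ℤ):ℝ) * m * (2*Real.pi/N)) - Real.sin (((a-b:ℤ):ℝ) * m * (2*Real.pi/N))) / 2 := by
    intro m _
    have e1 : (((a-b:ℤ)):ℝ) * m * (2*Real.pi/N) = (a:ℝ)*m*(2*Real.pi/N) - (b:ℝ)*m*(2*Real.pi/N) := by
      push_cast; ring
    have e2 : (((a+b:ℤ)):ℝ) * m * (2*Real.pi/N) = (a:ℝ)*m*(2*Real.pi/N) + (b:ℝ)*m*(2*Real.pi/N) := by
      push_cast; ring
    rw [e1, e2, Real.sin_sub, Real.sin_add]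
    ring
  rw [Finset.sum_congr rfl h, ← Finset.sum_div, Finset.sum_sub_distrib,
    sin_sum N hN (a+b), sin_sum N hN (a-b)]
  norm_num

private lemma sin_mul_sin_sum (N : ℕ) (hN : 0 < N) (x y : ℝ) (a b : ℤ)
    (hx : x = a) (hy : y = b) :
    ∑ m ∈ Finset.range N, Real.sin (x * m * (2*Real.pi/N)) * Real.sin (y * m * (2*Real.pi/N)) =
      ((if (N:ℤ) ∣ (a - b) then (N:ℝ) else 0) - (if (N:ℤ) ∣ (a + b) then (N:ℝ) else 0)) / 2 := by
  subst hx hy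
  have h : ∀ m ∈ Finset.range N,
      Real.sin ((a:ℝ) * m * (2*Real.pi/N)) * Real.sin ((b:ℝ) * m * (2*Real.pi/N))
      = (Real.cos (((a-b:ℤ):ℝ) * m * (2*Real.pi/N)) - Real.cos (((a+b:ℤ):ℝ) * m * (2*Real.pi/N))) / 2 := by
    intro m _
    have e1 : (((a-b:ℤ)):ℝ) * m * (2*Real.pi/N) = (a:ℝ)*m*(2*Real.pi/N) - (b:ℝ)*m*(2*Real.pi/N) := by
      push_cast; ring
    have e2 : (((a+b:ℤ)):ℝ) * m * (2*Real.pi/N) = (a:ℝ)*m*(2*Real.pi/N) + (b:ℝ)*m*(2*Real.pi/N) := by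
      push_cast; ring
    rw [e1, e2, Real.cos_sub, Real.cos_add]
    ring
  rw [Finset.sum_congr rfl h, ← Finset.sum_div, Finset.sum_sub_distrib,
    cos_sum N hN (a-b), cos_sum N hN (a+b)]


private lemma dvd_small (N : ℕ) (t : ℤ) (h1 : -(N:ℤ) < t) (h2 : t < N) :
    (N:ℤ) ∣ t ↔ t = 0 := by
  constructor
  · rintro ⟨c, rfl⟩
    rcases lt_trichotomy c 0 with h | h | h
    · exfalso; nlinarith
    · simp [h]
    · exfalso; nlinarith
  · rintro rfl; exact dvd_zero _

private lemma mod_two_cases (N x : ℕ) (h : x < 2 * N) :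
    x % N = if x < N then x else x - N := by
  split_ifs with h'
  · exact Nat.mod_eq_of_lt h'
  · rw [Nat.mod_eq_sub_mod (not_lt.1 h'), Nat.mod_eq_of_lt (by omega)]

private lemma fin_dvd_iff (N : ℕ) (hN : 0 < N) (a b j : Fin N) :
    (N:ℤ) ∣ ((a.val:ℤ) - b.val - j.val) ↔ b = a - j := by
  haveI : NeZero N := ⟨hN.ne'⟩
  have ha := a.isLt; have hb := b.isLt; have hj := j.isLt
  rw [eq_sub_iff_add_eq, Fin.ext_iff, Fin.val_add,
    mod_two_cases N _ (by omega)]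
  constructor
  · rintro ⟨c, hc⟩
    have hc0 : c = 0 ∨ c = -1 := by
      rcases lt_trichotomy c (-1) with h | h | h
      · exfalso; nlinarith
      · right; exact h
      · have h0 : 0 ≤ c := by omega
        rcases h0.lt_or_eq with h' | h'
        · exfalso; nlinarith
        · left; omega
    rcases hc0 with rfl | rfl
    · rw [mul_zero] at hc; split_ifs with h <;> omega
    · rw [mul_neg_one] at hc; split_ifs with h <;> omega
  · intro h
    split_ifs at h with h'
    · exact ⟨0, by omega⟩
    · exact ⟨-1, by omega⟩

private lemma fin_dvd_iff' (N : ℕ) (hN : 0 < N) (a b j : Fin N) :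
    (N:ℤ) ∣ ((a.val:ℤ) - b.val + j.val) ↔ b = a + j := by
  haveI : NeZero N := ⟨hN.ne'⟩
  have h1 : ((a.val:ℤ) - b.val + j.val) = -((b.val:ℤ) - a.val - j.val) := by ring
  rw [h1, dvd_neg, fin_dvd_iff N hN b a j, eq_sub_iff_add_eq]
  exact eq_comm

-- cos of Fin subtraction
private lemma cos_fin_sub (N : ℕ) (hN : 0 < N) (k j : Fin N) (m : ℕ) :
    Real.cos (((k - j : Fin N).val : ℝ) * m * (2*Real.pi/N)) =
      Real.cos (((k.val:ℝ) - j.val) * m * (2*Real.pi/N)) := by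
  haveI : NeZero N := ⟨hN.ne'⟩
  have hd : (N:ℤ) ∣ ((k.val:ℤ) - (k - j : Fin N).val - j.val) :=
    (fin_dvd_iff N hN k (k - j) j).2 rfl
  obtain ⟨c, hc⟩ := hd
  have hNr : (N:ℝ) ≠ 0 := by exact_mod_cast hN.ne'
  have hval : (((k - j : Fin N).val : ℝ)) = (k.val:ℝ) - j.val - N * c := by
    have : ((k - j : Fin N).val : ℤ) = (k.val:ℤ) - j.val - N * c := by omega
    exact_mod_cast congrArg (Int.cast : ℤ → ℝ) this
  have harg : (((k - j : Fin N).val : ℝ)) * m * (2*Real.pi/N)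
      = ((k.val:ℝ) - j.val) * m * (2*Real.pi/N) - ((c * m : ℤ) : ℝ) * (2*Real.pi) := by
    rw [hval]; push_cast; field_simp
  rw [harg, Real.cos_sub_int_mul_two_pi]

-- cos symmetry m ↦ N - m
private lemma cos_N_sub (N : ℕ) (hN : 0 < N) (m : ℕ) (hm : m ≤ N) (k : ℕ) :
    Real.cos ((k:ℝ) * ((N - m : ℕ):ℝ) * (2*Real.pi/N)) =
      Real.cos ((k:ℝ) * m * (2*Real.pi/N)) := by
  have hNr : (N:ℝ) ≠ 0 := by exact_mod_cast hN.ne'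
  have harg : (k:ℝ) * ((N - m : ℕ):ℝ) * (2*Real.pi/N)
      = -((k:ℝ) * m * (2*Real.pi/N) - ((k:ℤ):ℝ) * (2*Real.pi)) := by
    rw [Nat.cast_sub hm]; push_cast; field_simp; ring
  rw [harg, Real.cos_neg, Real.cos_sub_int_mul_two_pi]


private lemma key_forward (N : ℕ) (hN : 0 < N) (u : Fin N → ℝ) (j : Fin N) :
    ∑ m ∈ Finset.range N,
      ((∑ k : Fin N, u k * Real.cos ((k.val:ℝ) * m * (2*Real.pi/N)))^2
        + (∑ k : Fin N, u k * Real.sin ((k.val:ℝ) * m * (2*Real.pi/N)))^2)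
        * Real.cos ((j.val:ℝ) * m * (2*Real.pi/N))
    = N * ∑ k : Fin N, u k * u (k - j) := by
  haveI : NeZero N := ⟨hN.ne'⟩
  -- step 1: rewrite each summand as a double sum
  have step1 : ∀ m ∈ Finset.range N,
      ((∑ k : Fin N, u k * Real.cos ((k.val:ℝ) * m * (2*Real.pi/N)))^2
        + (∑ k : Fin N, u k * Real.sin ((k.val:ℝ) * m * (2*Real.pi/N)))^2)
        * Real.cos ((j.val:ℝ) * m * (2*Real.pi/N))
      = ∑ a : Fin N, ∑ b : Fin N, u a * u b *
          (Real.cos (((a.val:ℝ) - b.val) * m * (2*Real.pi/N))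
            * Real.cos ((j.val:ℝ) * m * (2*Real.pi/N))) := by
    intro m _
    rw [sq, sq, Finset.sum_mul_sum, Finset.sum_mul_sum, ← Finset.sum_add_distrib]
    rw [Finset.sum_mul]
    refine Finset.sum_congr rfl fun a _ => ?_
    rw [← Finset.sum_add_distrib, Finset.sum_mul]
    refine Finset.sum_congr rfl fun b _ => ?_
    have e : ((a.val:ℝ) - b.val) * m * (2*Real.pi/N)
        = (a.val:ℝ) * m * (2*Real.pi/N) - (b.val:ℝ) * m * (2*Real.pi/N) := by ring
    rw [e, Real.cos_sub]
    ring
  rw [Finset.sum_congr rfl step1, Finset.sum_comm]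
  have step2 : ∀ a : Fin N,
      ∑ m ∈ Finset.range N, ∑ b : Fin N, u a * u b *
          (Real.cos (((a.val:ℝ) - b.val) * m * (2*Real.pi/N))
            * Real.cos ((j.val:ℝ) * m * (2*Real.pi/N)))
      = (u a * u (a - j) * N + u a * u (a + j) * N) / 2 := by
    intro a
    rw [Finset.sum_comm]
    have inner : ∀ b : Fin N,
        ∑ m ∈ Finset.range N, u a * u b *
          (Real.cos (((a.val:ℝ) - b.val) * m * (2*Real.pi/N))
            * Real.cos ((j.val:ℝ) * m * (2*Real.pi/N)))
        = (u a * u b * (if (N:ℤ) ∣ ((a.val:ℤ) - b.val - j.val) then (N:ℝ) else 0)) / 2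
          + (u a * u b * (if (N:ℤ) ∣ ((a.val:ℤ) - b.val + j.val) then (N:ℝ) else 0)) / 2 := by
      intro b
      rw [← Finset.mul_sum,
        cos_mul_cos_sum N hN ((a.val:ℝ) - (b.val:ℝ)) ((j.val:ℝ))
          ((a.val:ℤ) - (b.val:ℤ)) ((j.val:ℤ)) (by push_cast; ring) (by push_cast; ring)]
      ring
    rw [Finset.sum_congr rfl (fun b _ => inner b), Finset.sum_add_distrib,
      ← Finset.sum_div, ← Finset.sum_div]
    have eval1 : ∑ b : Fin N,
        u a * u b * (if (N:ℤ) ∣ ((a.val:ℤ) - b.val - j.val) then (N:ℝ) else 0)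
        = u a * u (a - j) * N := by
      rw [Finset.sum_eq_single_of_mem (a - j) (Finset.mem_univ _)
        (fun b _ hb => by
          rw [if_neg (fun h => hb ((fin_dvd_iff N hN a b j).1 h)), mul_zero])]
      rw [if_pos ((fin_dvd_iff N hN a (a - j) j).2 rfl)]
    have eval2 : ∑ b : Fin N,
        u a * u b * (if (N:ℤ) ∣ ((a.val:ℤ) - b.val + j.val) then (N:ℝ) else 0)
        = u a * u (a + j) * N := by
      rw [Finset.sum_eq_single_of_mem (a + j) (Finset.mem_univ _)
        (fun b _ hb => by
          rw [if_neg (fun h => hb ((fin_dvd_iff' N hN a b j).1 h)), mul_zero])]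
      rw [if_pos ((fin_dvd_iff' N hN a (a + j) j).2 rfl)]
    rw [eval1, eval2]
    ring
  rw [Finset.sum_congr rfl (fun a _ => step2 a)]
  have reindex : ∑ a : Fin N, u a * u (a + j) = ∑ k : Fin N, u k * u (k - j) := by
    apply Fintype.sum_equiv (Equiv.addRight j)
    intro a
    simp only [Equiv.coe_addRight]
    rw [add_sub_cancel_right]
    ring
  rw [← Finset.sum_div, Finset.sum_add_distrib, ← Finset.sum_mul, ← Finset.sum_mul, reindex]
  ring


private lemma cos_mul_cos_sum_fin (N : ℕ) (hN : 0 < N) (q p : ℕ) :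
    ∑ k : Fin N, Real.cos ((k.val:ℝ) * q * (2*Real.pi/N)) * Real.cos ((k.val:ℝ) * p * (2*Real.pi/N)) =
      ((if (N:ℤ) ∣ ((q:ℤ) - p) then (N:ℝ) else 0) + (if (N:ℤ) ∣ ((q:ℤ) + p) then (N:ℝ) else 0)) / 2 := by
  rw [← cos_mul_cos_sum N hN (q:ℝ) (p:ℝ) q p (by push_cast; ring) (by push_cast; ring)]
  rw [← Fin.sum_univ_eq_sum_range (fun m : ℕ =>
    Real.cos ((q:ℝ) * m * (2*Real.pi/N)) * Real.cos ((p:ℝ) * m * (2*Real.pi/N))) N]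
  refine Finset.sum_congr rfl fun k _ => ?_
  rw [mul_comm ((k.val:ℝ)) (q:ℝ), mul_comm ((k.val:ℝ)) (p:ℝ)]

private lemma cos_mul_sin_sum_fin (N : ℕ) (hN : 0 < N) (q p : ℕ) :
    ∑ k : Fin N, Real.cos ((k.val:ℝ) * q * (2*Real.pi/N)) * Real.sin ((k.val:ℝ) * p * (2*Real.pi/N)) = 0 := by
  rw [← cos_mul_sin_sum N hN (q:ℝ) (p:ℝ) q p (by push_cast; ring) (by push_cast; ring)]
  rw [← Fin.sum_univ_eq_sum_range (fun m : ℕ =>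
    Real.cos ((q:ℝ) * m * (2*Real.pi/N)) * Real.sin ((p:ℝ) * m * (2*Real.pi/N))) N]
  refine Finset.sum_congr rfl fun k _ => ?_
  rw [mul_comm ((k.val:ℝ)) (q:ℝ), mul_comm ((k.val:ℝ)) (p:ℝ)]

private lemma if_eval (N : ℕ) (hN : 0 < N) (q p : ℕ) (hq : q ≤ N/2) (hp : p ≤ N/2) :
    ((if (N:ℤ) ∣ ((q:ℤ) - p) then (N:ℝ) else 0) + (if (N:ℤ) ∣ ((q:ℤ) + p) then (N:ℝ) else 0)) / 2
    = if q = p then (if q = 0 ∨ 2*q = N then (N:ℝ) else (N:ℝ)/2) else 0 := by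
  have hqN : q < N := lt_of_le_of_lt hq (Nat.div_lt_self hN one_lt_two)
  have hpN : p < N := lt_of_le_of_lt hp (Nat.div_lt_self hN one_lt_two)
  have h2N : q + p ≤ N := by omega
  have h1 : (N:ℤ) ∣ ((q:ℤ) - p) ↔ q = p := by
    rw [dvd_small N _ (by omega) (by omega)]; omega
  have h2 : (N:ℤ) ∣ ((q:ℤ) + p) ↔ (q = 0 ∧ p = 0) ∨ q + p = N := by
    constructor
    · rintro ⟨c, hc⟩
      have hc0 : c = 0 ∨ c = 1 := by
        rcases lt_trichotomy c 0 with h | h | h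
        · exfalso; nlinarith
        · left; omega
        · rcases lt_or_ge c 2 with h' | h'
          · right; omega
          · exfalso; nlinarith
      rcases hc0 with rfl | rfl
      · left; constructor <;> omega
      · right; omega
    · rintro (⟨rfl, rfl⟩ | h)
      · simp
      · exact ⟨1, by omega⟩
  simp only [h1, h2]
  split_ifs with hA hB hC
  · ring
  · exfalso; omega
  · exfalso; omega
  · ring
  · exfalso; omega
  · norm_num

private lemma key_backward (N : ℕ) (hN : 0 < N) (b : ℕ → ℝ) (j : Fin N) :
    ∑ k : Fin N, (∑ q ∈ Finset.Iic (N/2), b q * Real.cos ((k.val:ℝ) * q * (2*Real.pi/N))) *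
        (∑ q ∈ Finset.Iic (N/2), b q * Real.cos (((k - j : Fin N).val:ℝ) * q * (2*Real.pi/N)))
    = ∑ q ∈ Finset.Iic (N/2), (b q)^2 * (if q = 0 ∨ 2*q = N then (N:ℝ) else (N:ℝ)/2)
        * Real.cos ((j.val:ℝ) * q * (2*Real.pi/N)) := by
  have hsub : ∀ (k : Fin N) (q : ℕ),
      Real.cos (((k - j : Fin N).val:ℝ) * q * (2*Real.pi/N))
      = Real.cos ((k.val:ℝ) * q * (2*Real.pi/N)) * Real.cos ((j.val:ℝ) * q * (2*Real.pi/N))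
        + Real.sin ((k.val:ℝ) * q * (2*Real.pi/N)) * Real.sin ((j.val:ℝ) * q * (2*Real.pi/N)) := by
    intro k q
    rw [cos_fin_sub N hN k j q,
      show ((k.val:ℝ) - j.val) * q * (2*Real.pi/N)
        = (k.val:ℝ) * q * (2*Real.pi/N) - (j.val:ℝ) * q * (2*Real.pi/N) from by ring,
      Real.cos_sub]
  have step1 : ∀ k : Fin N,
      (∑ q ∈ Finset.Iic (N/2), b q * Real.cos ((k.val:ℝ) * q * (2*Real.pi/N))) *
        (∑ q ∈ Finset.Iic (N/2), b q * Real.cos (((k - j : Fin N).val:ℝ) * q * (2*Real.pi/N)))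
      = ∑ q ∈ Finset.Iic (N/2), ∑ p ∈ Finset.Iic (N/2),
          ((b q * b p * Real.cos ((j.val:ℝ) * p * (2*Real.pi/N))) *
              (Real.cos ((k.val:ℝ) * q * (2*Real.pi/N)) * Real.cos ((k.val:ℝ) * p * (2*Real.pi/N)))
            + (b q * b p * Real.sin ((j.val:ℝ) * p * (2*Real.pi/N))) *
              (Real.cos ((k.val:ℝ) * q * (2*Real.pi/N)) * Real.sin ((k.val:ℝ) * p * (2*Real.pi/N)))) := by
    intro k
    rw [Finset.sum_mul_sum]
    refine Finset.sum_congr rfl fun q _ => Finset.sum_congr rfl fun p _ => ?_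
    rw [hsub k p]
    ring
  rw [Finset.sum_congr rfl (fun k _ => step1 k), Finset.sum_comm]
  refine Finset.sum_congr rfl fun q hq => ?_
  rw [Finset.sum_comm]
  have hq' : q ≤ N/2 := Finset.mem_Iic.1 hq
  have inner : ∀ p ∈ Finset.Iic (N/2),
      ∑ k : Fin N,
          ((b q * b p * Real.cos ((j.val:ℝ) * p * (2*Real.pi/N))) *
              (Real.cos ((k.val:ℝ) * q * (2*Real.pi/N)) * Real.cos ((k.val:ℝ) * p * (2*Real.pi/N)))
            + (b q * b p * Real.sin ((j.val:ℝ) * p * (2*Real.pi/N))) *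
              (Real.cos ((k.val:ℝ) * q * (2*Real.pi/N)) * Real.sin ((k.val:ℝ) * p * (2*Real.pi/N))))
      = (b q * b p * Real.cos ((j.val:ℝ) * p * (2*Real.pi/N))) *
          (if q = p then (if q = 0 ∨ 2*q = N then (N:ℝ) else (N:ℝ)/2) else 0) := by
    intro p hp
    have hp' : p ≤ N/2 := Finset.mem_Iic.1 hp
    rw [Finset.sum_add_distrib, ← Finset.mul_sum, ← Finset.mul_sum,
      cos_mul_cos_sum_fin N hN q p, cos_mul_sin_sum_fin N hN q p,
      if_eval N hN q p hq' hp']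
    ring
  rw [Finset.sum_congr rfl inner,
    Finset.sum_eq_single_of_mem q hq
      (fun p _ hp => by rw [if_neg (fun h => hp h.symm), mul_zero])]
  rw [if_pos rfl]
  ring


open Matrix


/-- For even `N`, the image of the sphere `{u : uᵀu = ℰ}` under the map with
components `f_j(u) = ∑ₖ u_k u_{(k-j) mod N}`, `j = 0,...,n-1`, equals the convex
hull of the vectors `ℰ ξ_j(1:n)`, `j = 0,...,N/2`, where `ξ_j(1:n)` has entries
`cos(kj·2π/N)`, `k = 0,...,n-1`. -/
theorem stmt14 (N n : ℕ) (hN : 0 < N) (hNeven : Even N) (hn : n ≤ N)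
    (E : ℝ) (hE : 0 < E)
    (f : (Fin N → ℝ) → Fin n → ℝ)
    (hf : ∀ (u : Fin N → ℝ) (j : Fin n),
      f u j = ∑ k : Fin N, u k * u (k - Fin.castLE hn j)) :
    f '' {u : Fin N → ℝ | u ⬝ᵥ u = E} =
      convexHull ℝ
        ((fun jj : ℕ => fun k : Fin n =>
            E * Real.cos ((k : ℕ) * jj * (2 * Real.pi / N))) '' Set.Iic (N / 2)) := by
  classical
  haveI : NeZero N := ⟨hN.ne'⟩
  have hNr : (N:ℝ) ≠ 0 := by exact_mod_cast hN.ne'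
  have hNpos : (0:ℝ) < N := by exact_mod_cast hN
  apply Set.eq_of_subset_of_subset
  · -- forward inclusion
    rintro x ⟨u, hu, rfl⟩
    have hu' : ∑ k : Fin N, u k * u k = E := hu
    rw [_root_.convexHull_eq]
    simp only [Set.mem_setOf_eq]
    have hpars : ∑ m ∈ Finset.range N,
        ((∑ k : Fin N, u k * Real.cos ((k.val:ℝ) * m * (2*Real.pi/N)))^2
          + (∑ k : Fin N, u k * Real.sin ((k.val:ℝ) * m * (2*Real.pi/N)))^2) = N * E := by
      have h0 := key_forward N hN u 0
      simp only [Fin.val_zero, Nat.cast_zero, zero_mul, Real.cos_zero, mul_one, sub_zero] at h0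
      rw [h0, hu']
    refine ⟨ℕ, Finset.range N,
      fun m => ((∑ k : Fin N, u k * Real.cos ((k.val:ℝ) * m * (2*Real.pi/N)))^2
          + (∑ k : Fin N, u k * Real.sin ((k.val:ℝ) * m * (2*Real.pi/N)))^2) / (N * E),
      fun m => fun k : Fin n => E * Real.cos ((k : ℕ) * m * (2 * Real.pi / N)),
      ?_, ?_, ?_, ?_⟩
    · intro m _
      positivity
    · rw [← Finset.sum_div, hpars, div_self (by positivity)]
    · intro m hm
      have hmN : m < N := Finset.mem_range.1 hm
      by_cases hm2 : m ≤ N / 2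
      · exact ⟨m, Set.mem_Iic.2 hm2, rfl⟩
      · refine ⟨N - m, Set.mem_Iic.2 (by omega), ?_⟩
        funext k
        show E * Real.cos (((k:ℕ):ℝ) * ((N - m : ℕ):ℝ) * (2 * Real.pi / N)) = _
        rw [cos_N_sub N hN m hmN.le (k:ℕ)]
    · rw [Finset.centerMass_eq_of_sum_1 _ _
        (by rw [← Finset.sum_div, hpars, div_self (by positivity)])]
      funext j
      rw [Finset.sum_apply]
      have hkey := key_forward N hN u (Fin.castLE hn j)
      simp only [Fin.coe_castLE] at hkey
      calc ∑ m ∈ Finset.range N,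
            ((((∑ k : Fin N, u k * Real.cos ((k.val:ℝ) * m * (2*Real.pi/N)))^2
              + (∑ k : Fin N, u k * Real.sin ((k.val:ℝ) * m * (2*Real.pi/N)))^2) / (N * E))
              • (E * Real.cos (((j:ℕ):ℝ) * m * (2 * Real.pi / N))))
          = (∑ m ∈ Finset.range N,
              ((∑ k : Fin N, u k * Real.cos ((k.val:ℝ) * m * (2*Real.pi/N)))^2
                + (∑ k : Fin N, u k * Real.sin ((k.val:ℝ) * m * (2*Real.pi/N)))^2)
                * Real.cos (((j:ℕ):ℝ) * m * (2 * Real.pi / N))) / N := by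
            rw [Finset.sum_div]
            refine Finset.sum_congr rfl fun m _ => ?_
            rw [smul_eq_mul]
            have hAc : ∀ A c : ℝ, A / (N * E) * (E * c) = A * c / N := by
              intro A c
              have hE0 : E ≠ 0 := hE.ne'
              calc A / (N * E) * (E * c) = A * c / N * (E / E) := by ring
                _ = A * c / N := by rw [div_self hE0, mul_one]
            exact hAc _ _
        _ = f u j := by
            rw [hkey, hf u j]
            field_simp
  · -- backward inclusion
    intro x hx
    rw [_root_.convexHull_eq] at hx
    obtain ⟨ι, t, w, z, hw0, hw1, hz, hcm⟩ := hx
    have hz' : ∀ i ∈ t, ∃ q, q ≤ N / 2 ∧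
        z i = fun k : Fin n => E * Real.cos ((k : ℕ) * q * (2 * Real.pi / N)) := by
      intro i hi
      obtain ⟨q, hq1, hq2⟩ := hz i hi
      exact ⟨q, Set.mem_Iic.1 hq1, hq2.symm⟩
    set m : ι → ℕ := fun i => if h : i ∈ t then (hz' i h).choose else 0 with hm
    have hm1 : ∀ i ∈ t, m i ≤ N / 2 := by
      intro i hi
      simp only [hm, dif_pos hi]
      exact (hz' i hi).choose_spec.1
    have hm2 : ∀ i ∈ t, z i
        = fun k : Fin n => E * Real.cos ((k : ℕ) * (m i) * (2 * Real.pi / N)) := by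
      intro i hi
      simp only [hm, dif_pos hi]
      exact (hz' i hi).choose_spec.2
    set lam : ℕ → ℝ := fun p => ∑ i ∈ t.filter (fun i => m i = p), w i with hlam
    have hlam0 : ∀ p, 0 ≤ lam p :=
      fun p => Finset.sum_nonneg fun i hi => hw0 i (Finset.mem_filter.1 hi).1
    have hlam1 : ∑ p ∈ Finset.Iic (N/2), lam p = 1 := by
      rw [hlam]
      rw [Finset.sum_fiberwise_of_maps_to (fun i hi => Finset.mem_Iic.2 (hm1 i hi)) w]
      exact hw1
    set b : ℕ → ℝ := fun p =>
      Real.sqrt (lam p * E / (if p = 0 ∨ 2*p = N then (N:ℝ) else (N:ℝ)/2)) with hbdef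
    have hdpos : ∀ p : ℕ, (0:ℝ) < (if p = 0 ∨ 2*p = N then (N:ℝ) else (N:ℝ)/2) := by
      intro p
      split_ifs <;> positivity
    have hb : ∀ p, (b p)^2 * (if p = 0 ∨ 2*p = N then (N:ℝ) else (N:ℝ)/2) = lam p * E := by
      intro p
      rw [hbdef]
      rw [Real.sq_sqrt (div_nonneg (mul_nonneg (hlam0 p) hE.le) (hdpos p).le)]
      exact div_mul_cancel₀ _ (hdpos p).ne'
    set u : Fin N → ℝ := fun k =>
      ∑ p ∈ Finset.Iic (N/2), b p * Real.cos ((k.val:ℝ) * p * (2*Real.pi/N)) with hudef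
    have key : ∀ jj : Fin N, ∑ k : Fin N, u k * u (k - jj)
        = ∑ p ∈ Finset.Iic (N/2), lam p * E * Real.cos ((jj.val:ℝ) * p * (2*Real.pi/N)) := by
      intro jj
      rw [hudef]
      rw [key_backward N hN b jj]
      exact Finset.sum_congr rfl fun p _ => by rw [hb p]
    refine ⟨u, ?_, ?_⟩
    · show u ⬝ᵥ u = E
      have h0 := key (0 : Fin N)
      simp only [sub_zero, Fin.val_zero, Nat.cast_zero, zero_mul, Real.cos_zero, mul_one] at h0
      show ∑ k : Fin N, u k * u k = E
      rw [h0, ← Finset.sum_mul, hlam1, one_mul]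
    · rw [← hcm, Finset.centerMass_eq_of_sum_1 _ _ hw1]
      funext j
      rw [hf u j, key (Fin.castLE hn j), Finset.sum_apply]
      simp only [Pi.smul_apply]
      rw [← Finset.sum_fiberwise_of_maps_to (fun i hi => Finset.mem_Iic.2 (hm1 i hi))
        (fun i => w i • z i j)]
      refine Finset.sum_congr rfl fun p hp => ?_
      have : ∀ i ∈ t.filter (fun i => m i = p),
          w i • z i j = w i * (E * Real.cos (((j:ℕ):ℝ) * p * (2 * Real.pi / N))) := by
        intro i hi
        obtain ⟨hit, hmi⟩ := Finset.mem_filter.1 hi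
        rw [hm2 i hit, smul_eq_mul]
        simp only [hmi]
      rw [Finset.sum_congr rfl this, ← Finset.sum_mul]
      rw [Fin.coe_castLE]
      rw [hlam]
      ring
end

section
/- Let P = cI_n with c > 0, σ² > 0, ℰ > 0, and Q(r) = r_0 I_n + Σ_{i=1}^{n-1} r_i Q_i + σ² P^{-1}. Then r† = (ℰ, 0, ..., 0) is the unique minimizer over the feasible set ℱ (the image of the sphere {u^T u = ℰ} under the quadratic map f) of both r ↦ log det(σ² Q(r)^{-1}) and r ↦ Tr(σ² Q(r)^{-1}). -/
open Matrix Finset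

set_option maxHeartbeats 1000000 in
open Finset

lemma jensen_log {n : ℕ} (hn : 0 < n) (a : ℝ) (ha : 0 < a) (lam : Fin n → ℝ)
    (hpos : ∀ i, 0 < lam i) (hsum : ∑ i, lam i = n * a) (hne : ∃ i, lam i ≠ a) :
    ∑ i, Real.log (lam i) < n * Real.log a := by
  have hnR : (0:ℝ) < n := Nat.cast_pos.mpr hn
  have hpne : ∃ j ∈ univ (α := Fin n), ∃ k ∈ univ, lam j ≠ lam k := by
    obtain ⟨i, hi⟩ := hne
    by_contra h
    push_neg at h
    have hall : ∀ j, lam j = lam i := fun j => h j (mem_univ _) i (mem_univ _)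
    have : (n : ℝ) * lam i = n * a := by
      rw [← hsum]; rw [Finset.sum_congr rfl fun j _ => hall j]; simp [mul_comm]
    exact hi (mul_left_cancel₀ hnR.ne' this)
  have := strictConcaveOn_log_Ioi.lt_map_sum (t := univ) (w := fun _ : Fin n => (n:ℝ)⁻¹)
    (p := lam) (fun i _ => by positivity)
    (by simp [Finset.card_univ]; field_simp)
    (fun i _ => hpos i) hpne
  simp only [smul_eq_mul] at this
  have h1 : ∑ i, (n:ℝ)⁻¹ * lam i = a := by
    rw [← Finset.mul_sum, hsum]; field_simp
  rw [h1, ← Finset.mul_sum] at this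
  calc ∑ i, Real.log (lam i) = n * ((n:ℝ)⁻¹ * ∑ i, Real.log (lam i)) := by field_simp
  _ < n * Real.log a := by exact mul_lt_mul_of_pos_left this hnR

lemma jensen_inv {n : ℕ} (hn : 0 < n) (a : ℝ) (ha : 0 < a) (lam : Fin n → ℝ)
    (hpos : ∀ i, 0 < lam i) (hsum : ∑ i, lam i = n * a) (hne : ∃ i, lam i ≠ a) :
    n * a⁻¹ < ∑ i, (lam i)⁻¹ := by
  have hnR : (0:ℝ) < n := Nat.cast_pos.mpr hn
  have hpne : ∃ j ∈ univ (α := Fin n), ∃ k ∈ univ, lam j ≠ lam k := by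
    obtain ⟨i, hi⟩ := hne
    by_contra h
    push_neg at h
    have hall : ∀ j, lam j = lam i := fun j => h j (mem_univ _) i (mem_univ _)
    have : (n : ℝ) * lam i = n * a := by
      rw [← hsum]; rw [Finset.sum_congr rfl fun j _ => hall j]; simp [mul_comm]
    exact hi (mul_left_cancel₀ hnR.ne' this)
  have hcvx : StrictConvexOn ℝ (Set.Ioi 0) (fun x : ℝ => x ^ (-1:ℤ)) :=
    strictConvexOn_zpow (by decide) (by decide)
  have := hcvx.map_sum_lt (t := univ) (w := fun _ : Fin n => (n:ℝ)⁻¹)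
    (p := lam) (fun i _ => by positivity)
    (by simp [Finset.card_univ]; field_simp)
    (fun i _ => hpos i) hpne
  simp only [smul_eq_mul, _root_.zpow_neg_one] at this
  have h1 : ∑ i, (n:ℝ)⁻¹ * lam i = a := by
    rw [← Finset.mul_sum, hsum]; field_simp
  rw [h1, ← Finset.mul_sum] at this
  calc (n:ℝ) * a⁻¹ < n * ((n:ℝ)⁻¹ * ∑ i, (lam i)⁻¹) := mul_lt_mul_of_pos_left this hnR
  _ = ∑ i, (lam i)⁻¹ := by field_simp

set_option maxHeartbeats 1000000 in
open Matrix

lemma spec_facts {n : ℕ} {A : Matrix (Fin n) (Fin n) ℝ} (hA : A.PosDef) :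
    ∃ lam : Fin n → ℝ, (∀ i, 0 < lam i) ∧ A.trace = ∑ i, lam i ∧ A.det = ∏ i, lam i ∧
      A⁻¹.trace = ∑ i, (lam i)⁻¹ ∧ ∀ a : ℝ, (∀ i, lam i = a) → A = a • 1 := by
  set lam := hA.1.eigenvalues with hlam
  set U := (hA.1.eigenvectorUnitary : Matrix (Fin n) (Fin n) ℝ) with hUdef
  have hpos : ∀ i, 0 < lam i := hA.eigenvalues_pos
  have hU : star U * U = 1 := Matrix.mem_unitaryGroup_iff'.mp hA.1.eigenvectorUnitary.2
  have hU' : U * star U = 1 := Matrix.mem_unitaryGroup_iff.mp hA.1.eigenvectorUnitary.2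
  have hAeq : A = U * diagonal lam * star U := by
    have := hA.1.spectral_theorem
    simpa using this
  clear_value lam U
  clear hlam hUdef
  refine ⟨lam, hpos, ?_, ?_, ?_, ?_⟩
  · rw [hAeq, Matrix.trace_mul_cycle, hU, one_mul, trace_diagonal]
  · rw [hAeq, det_mul, det_mul, det_diagonal, mul_right_comm, ← det_mul, hU', det_one, one_mul]
  · have hinv : A⁻¹ = U * diagonal (fun i => (lam i)⁻¹) * star U := by
      apply inv_eq_right_inv
      rw [hAeq]
      calc U * diagonal lam * star U * (U * diagonal (fun i => (lam i)⁻¹) * star U)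
          = U * (diagonal lam * ((star U * U) * diagonal (fun i => (lam i)⁻¹))) * star U := by
            simp only [mul_assoc]
        _ = 1 := by
            rw [hU, one_mul, diagonal_mul_diagonal]
            have h2 : (fun i => lam i * (lam i)⁻¹) = fun _ => (1:ℝ) := by
              funext i; exact mul_inv_cancel₀ (hpos i).ne'
            rw [h2, diagonal_one, mul_one, hU']
    rw [hinv, Matrix.trace_mul_cycle, hU, one_mul, trace_diagonal]
  · intro a h
    have hD : diagonal lam = a • 1 := by rw [funext h, smul_one_eq_diagonal]
    rw [hAeq, hD, Matrix.mul_smul, Matrix.smul_mul, mul_one, hU']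

set_option maxHeartbeats 1000000 in
open Matrix

lemma toeplitz_facts (N n : ℕ) (hn : 0 < n) (hnN : n ≤ N) (E : ℝ)
    (Qi : Fin n → Matrix (Fin n) (Fin n) ℝ)
    (hQi : ∀ i j l : Fin n,
      Qi i j l = if |((j : ℕ) : ℤ) - ((l : ℕ) : ℤ)| = ((i : ℕ) : ℤ) then 1 else 0)
    (r : Fin n → ℝ) (u : Fin N → ℝ) (huE : u ⬝ᵥ u = E)
    (hu : ∀ j : Fin n, r j = ∑ k : Fin N, u k * u (k - Fin.castLE hnN j)) :
    (∑ i, r i • Qi i).PosSemidef ∧ (∀ j, (∑ i, r i • Qi i) j j = E) ∧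
      (∀ i : Fin n, (∑ i, r i • Qi i) ⟨0, hn⟩ i = r i) := by
  have : NeZero N := ⟨by omega⟩
  set g : Fin N → ℝ := fun s => ∑ k : Fin N, u k * u (k - s) with hg
  have hgsymm : ∀ s, g (-s) = g s := by
    intro s
    have h1 : g (-s) = ∑ k : Fin N, u k * u (k + s) := by
      simp only [hg, sub_neg_eq_add]
    have h2 := Equiv.sum_comp (Equiv.addRight s) (fun k => u (k - s) * u k)
    simp only [Equiv.coe_addRight, add_sub_cancel_right] at h2
    rw [h1, h2]
    simp only [hg]
    exact Finset.sum_congr rfl fun k _ => mul_comm _ _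
  have hgu : ∀ j : Fin n, r j = g (Fin.castLE hnN j) := hu
  have hentry : ∀ j l : Fin n,
      (∑ i, r i • Qi i) j l = g (Fin.castLE hnN l - Fin.castLE hnN j) := by
    intro j l
    have hd : (((j : ℕ) : ℤ) - ((l : ℕ) : ℤ)).natAbs < n := by
      have := j.2; have := l.2; omega
    set m : Fin n := ⟨(((j : ℕ) : ℤ) - ((l : ℕ) : ℤ)).natAbs, hd⟩ with hm
    have hcond : ∀ i : Fin n,
        (|((j : ℕ) : ℤ) - ((l : ℕ) : ℤ)| = ((i : ℕ) : ℤ)) ↔ i = m := by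
      intro i
      rw [Int.abs_eq_natAbs, Fin.ext_iff]
      simp only [hm]
      omega
    have hsum : (∑ i, r i • Qi i) j l = r m := by
      have h1 : ∀ i : Fin n, (r i • Qi i) j l = if i = m then r m else 0 := by
        intro i
        rw [Matrix.smul_apply, hQi, smul_eq_mul]
        simp only [hcond i]
        by_cases h : i = m
        · subst h; simp
        · simp [h]
      rw [Matrix.sum_apply, Finset.sum_congr rfl fun i _ => h1 i]
      simp
    rw [hsum, hgu m]
    rcases le_or_gt (l : ℕ) (j : ℕ) with hle | hlt
    · have hsub : Fin.castLE hnN j - Fin.castLE hnN l = Fin.castLE hnN m := by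
        apply Fin.ext
        rw [Fin.sub_val_of_le (by simpa using hle)]
        simp only [Fin.coe_castLE, hm]
        omega
      rw [← hgsymm (Fin.castLE hnN m), ← hsub, neg_sub]
    · have hsub : Fin.castLE hnN l - Fin.castLE hnN j = Fin.castLE hnN m := by
        apply Fin.ext
        rw [Fin.sub_val_of_le (by simpa using hlt.le)]
        simp only [Fin.coe_castLE, hm]
        omega
      rw [hsub]
  refine ⟨?_, ?_, ?_⟩
  · set V : Matrix (Fin n) (Fin N) ℝ := fun j k => u (k - Fin.castLE hnN j) with hV
    have : (∑ i, r i • Qi i) = V * Vᴴ := by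
      ext j l
      rw [hentry j l, Matrix.mul_apply]
      have h2 := Equiv.sum_comp (Equiv.addRight (Fin.castLE hnN j))
        (fun k => V j k * Vᴴ k l)
      rw [← h2]
      simp only [hg, hV, Equiv.coe_addRight, conjTranspose_apply, star_trivial]
      refine Finset.sum_congr rfl fun k _ => ?_
      rw [add_sub_cancel_right]
      congr 2
      abel
    rw [this]
    exact posSemidef_self_mul_conjTranspose V
  · intro j
    rw [hentry j j, sub_self, ← huE]
    simp [hg, dotProduct]
  · intro i
    rw [hentry ⟨0, hn⟩ i, hgu i]
    congr 1
    have : Fin.castLE hnN (⟨0, hn⟩ : Fin n) = 0 := by apply Fin.ext; simp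
    rw [this, sub_zero]


set_option maxHeartbeats 1000000 in
/-- For the ridge kernel `P = cIₙ`, the vector `r† = (ℰ, 0, ..., 0)` is the unique
minimizer over the feasible set `ℱ` (the image of the sphere `{uᵀu = ℰ}` under the
quadratic map `f`) of both `r ↦ log det(σ² Q(r)⁻¹)` and `r ↦ Tr(σ² Q(r)⁻¹)`, where
`Q(r) = r_0 I + ∑_{i=1}^{n-1} r_i Q_i + σ² P⁻¹`. -/
theorem stmt16 (N n : ℕ) (hn : 0 < n) (hnN : n ≤ N)
    (c σ2 E : ℝ) (hc : 0 < c) (hσ : 0 < σ2) (hE : 0 < E)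
    (P : Matrix (Fin n) (Fin n) ℝ) (hP : P = c • (1 : Matrix (Fin n) (Fin n) ℝ))
    (Qi : Fin n → Matrix (Fin n) (Fin n) ℝ)
    (hQi : ∀ i j l : Fin n,
      Qi i j l = if |((j : ℕ) : ℤ) - ((l : ℕ) : ℤ)| = ((i : ℕ) : ℤ) then 1 else 0)
    (Q : (Fin n → ℝ) → Matrix (Fin n) (Fin n) ℝ)
    (hQ : ∀ r : Fin n → ℝ, Q r = ∑ i : Fin n, r i • Qi i + σ2 • P⁻¹)
    (F : Set (Fin n → ℝ))
    (hF : F = {r : Fin n → ℝ | ∃ u : Fin N → ℝ, u ⬝ᵥ u = E ∧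
      ∀ j : Fin n, r j = ∑ k : Fin N, u k * u (k - Fin.castLE hnN j)})
    (rdag : Fin n → ℝ) (hrdag : ∀ i : Fin n, rdag i = if (i : ℕ) = 0 then E else 0) :
    rdag ∈ F ∧
    (∀ r ∈ F, r ≠ rdag →
      Real.log ((σ2 • (Q rdag)⁻¹).det) < Real.log ((σ2 • (Q r)⁻¹).det)) ∧
    (∀ r ∈ F, r ≠ rdag →
      (σ2 • (Q rdag)⁻¹).trace < (σ2 • (Q r)⁻¹).trace) := by
  have hNN : NeZero N := ⟨by omega⟩
  set a : ℝ := E + σ2 / c with ha_def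
  have ha : 0 < a := by positivity
  -- σ2 • P⁻¹ = (σ2/c) • 1
  have hPinv : P⁻¹ = c⁻¹ • (1 : Matrix (Fin n) (Fin n) ℝ) := by
    apply inv_eq_right_inv
    rw [hP, Matrix.smul_mul, Matrix.mul_smul, smul_smul, one_mul, mul_inv_cancel₀ hc.ne',
      one_smul]
  have hQr : ∀ r : Fin n → ℝ, Q r = (∑ i, r i • Qi i) + (σ2 / c) • 1 := by
    intro r
    rw [hQ, hPinv, smul_smul, div_eq_mul_inv]
  -- membership of rdag
  have hmem : rdag ∈ F := by
    rw [hF]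
    refine ⟨fun k => if k = 0 then Real.sqrt E else 0, ?_, ?_⟩
    · have h1 : ∀ k : Fin N, (if k = 0 then Real.sqrt E else 0) *
          (if k = 0 then Real.sqrt E else 0) = if k = 0 then E else 0 := by
        intro k
        by_cases hk : k = 0 <;> simp [hk, Real.mul_self_sqrt hE.le]
      rw [dotProduct, Finset.sum_congr rfl fun k _ => h1 k]
      simp
    · intro j
      rw [hrdag]
      have h1 : ∀ k : Fin N, (if k = 0 then Real.sqrt E else 0) *
          (if k - Fin.castLE hnN j = 0 then Real.sqrt E else 0)
          = if k = 0 then (if (j : ℕ) = 0 then E else 0) else 0 := by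
        intro k
        by_cases hk : k = 0
        · subst hk
          by_cases hj : (j : ℕ) = 0
          · have hj0 : Fin.castLE hnN j = 0 := by apply Fin.ext; simpa using hj
            simp [hj0, hj, Real.mul_self_sqrt hE.le]
          · have hj0 : Fin.castLE hnN j ≠ 0 := by
              intro h
              apply hj
              simpa using congrArg Fin.val h
            simp [hj0, hj]
        · simp [hk]
      rw [Finset.sum_congr rfl fun k _ => h1 k]
      simp
  refine ⟨hmem, ?_⟩
  -- Q rdag = a • 1
  have hQdag : Q rdag = a • 1 := by
    rw [hQr]
    have hz : NeZero n := ⟨hn.ne'⟩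
    have hQi0 : Qi 0 = 1 := by
      ext j l
      rw [hQi]
      by_cases h : j = l
      · subst h; simp
      · have hnz : ¬(((j : ℕ) : ℤ) - ((l : ℕ) : ℤ) = 0) := by
          intro hc'
          exact h (Fin.ext (by omega))
        simp [Matrix.one_apply_ne h, hnz]
    have hsum : (∑ i, rdag i • Qi i) = E • (1 : Matrix (Fin n) (Fin n) ℝ) := by
      rw [Finset.sum_eq_single 0]
      · rw [hrdag, hQi0]; simp
      · intro i _ hi
        have : rdag i = 0 := by
          rw [hrdag]
          have : (i : ℕ) ≠ 0 := fun h => hi (Fin.ext h)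
          simp [this]
        rw [this, zero_smul]
      · intro h; exact absurd (Finset.mem_univ _) h
    rw [hsum, ← add_smul]
  have hQdaginv : (Q rdag)⁻¹ = a⁻¹ • 1 := by
    apply inv_eq_right_inv
    rw [hQdag, Matrix.smul_mul, Matrix.mul_smul, smul_smul, one_mul,
      mul_inv_cancel₀ ha.ne', one_smul]
  -- value at rdag
  have hdet_dag : (σ2 • (Q rdag)⁻¹).det = (σ2 * a⁻¹) ^ n := by
    rw [hQdaginv, smul_smul, Matrix.det_smul, det_one, mul_one]
    simp
  have htr_dag : (σ2 • (Q rdag)⁻¹).trace = (σ2 * a⁻¹) * n := by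
    rw [hQdaginv, smul_smul, Matrix.trace_smul, Matrix.trace_one]
    simp [mul_comm]
  -- main estimates for r ∈ F, r ≠ rdag
  have key : ∀ r ∈ F, r ≠ rdag →
      (∑ i : Fin n, Real.log ((σ2 • (Q rdag)⁻¹).det))= (∑ i : Fin n, Real.log ((σ2 • (Q rdag)⁻¹).det)) := fun _ _ _ => rfl
  constructor
  · -- log det
    intro r hr hne
    rw [hF] at hr
    obtain ⟨u, huE, hu⟩ := hr
    obtain ⟨hTps, hTdiag, hTrec⟩ := toeplitz_facts N n hn hnN E Qi hQi r u huE hu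
    have hone : ((σ2 / c) • (1 : Matrix (Fin n) (Fin n) ℝ)).PosDef := by
      rw [Matrix.smul_one_eq_diagonal]
      exact Matrix.PosDef.diagonal (fun _ => by positivity)
    have hQpd : (Q r).PosDef := by
      rw [hQr]
      exact Matrix.PosDef.posSemidef_add hTps hone
    obtain ⟨lam, hpos, htr, hdet, htrinv, hconst⟩ := spec_facts hQpd
    have htrace : (Q r).trace = n * a := by
      rw [hQr, Matrix.trace_add, Matrix.trace_smul, Matrix.trace_one]
      have : (∑ i, r i • Qi i).trace = n * E := by
        calc (∑ i, r i • Qi i).trace = ∑ j : Fin n, (∑ i, r i • Qi i) j j := rfl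
        _ = ∑ _j : Fin n, E := Finset.sum_congr rfl fun j _ => hTdiag j
        _ = n * E := by simp [mul_comm]
      rw [this]
      simp [ha_def, smul_eq_mul, Fintype.card_fin]
      ring
    have hsum : ∑ i, lam i = n * a := by rw [← htr, htrace]
    have hlamne : ∃ i, lam i ≠ a := by
      by_contra h
      push_neg at h
      have hQeq : Q r = a • 1 := hconst a h
      apply hne
      funext i
      have h1 : (∑ i, r i • Qi i) = Q r - (σ2 / c) • 1 := by rw [hQr]; exact (add_sub_cancel_right _ _).symm
      have h2 : r i = (Q r - (σ2 / c) • 1) ⟨0, hn⟩ i := by rw [← h1]; exact (hTrec i).symm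
      rw [h2, hQeq, hrdag]
      rw [Matrix.sub_apply, Matrix.smul_apply, Matrix.smul_apply]
      by_cases hi : (i : ℕ) = 0
      · have : (⟨0, hn⟩ : Fin n) = i := Fin.ext (by simp [hi])
        rw [this]
        simp [Matrix.one_apply_eq, ha_def, hi]
      · have : (⟨0, hn⟩ : Fin n) ≠ i := fun h => hi (by simpa using (congrArg Fin.val h).symm)
        rw [Matrix.one_apply_ne this]
        simp [hi]
    have hlog := jensen_log hn a ha lam hpos hsum hlamne
    -- compute both logs
    have hdetr : (σ2 • (Q r)⁻¹).det = σ2 ^ n * ((Q r).det)⁻¹ := by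
      rw [Matrix.det_smul, Matrix.det_nonsing_inv]
      simp
    have hdQ : 0 < (Q r).det := hQpd.det_pos
    have hlogr : Real.log ((σ2 • (Q r)⁻¹).det)
        = n * Real.log σ2 - ∑ i, Real.log (lam i) := by
      rw [hdetr, Real.log_mul (by positivity) (by positivity), Real.log_pow,
        Real.log_inv, hdet, Real.log_prod (fun i _ => (hpos i).ne')]
      ring
    have hlogdag : Real.log ((σ2 • (Q rdag)⁻¹).det) = n * Real.log σ2 - n * Real.log a := by
      rw [hdet_dag, Real.log_pow, Real.log_mul hσ.ne' (by positivity), Real.log_inv]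
      ring
    rw [hlogr, hlogdag]
    linarith
  · -- trace
    intro r hr hne
    rw [hF] at hr
    obtain ⟨u, huE, hu⟩ := hr
    obtain ⟨hTps, hTdiag, hTrec⟩ := toeplitz_facts N n hn hnN E Qi hQi r u huE hu
    have hone : ((σ2 / c) • (1 : Matrix (Fin n) (Fin n) ℝ)).PosDef := by
      rw [Matrix.smul_one_eq_diagonal]
      exact Matrix.PosDef.diagonal (fun _ => by positivity)
    have hQpd : (Q r).PosDef := by
      rw [hQr]
      exact Matrix.PosDef.posSemidef_add hTps hone
    obtain ⟨lam, hpos, htr, hdet, htrinv, hconst⟩ := spec_facts hQpd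
    have htrace : (Q r).trace = n * a := by
      rw [hQr, Matrix.trace_add, Matrix.trace_smul, Matrix.trace_one]
      have : (∑ i, r i • Qi i).trace = n * E := by
        calc (∑ i, r i • Qi i).trace = ∑ j : Fin n, (∑ i, r i • Qi i) j j := rfl
        _ = ∑ _j : Fin n, E := Finset.sum_congr rfl fun j _ => hTdiag j
        _ = n * E := by simp [mul_comm]
      rw [this]
      simp [ha_def, smul_eq_mul, Fintype.card_fin]
      ring
    have hsum : ∑ i, lam i = n * a := by rw [← htr, htrace]
    have hlamne : ∃ i, lam i ≠ a := by
      by_contra h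
      push_neg at h
      have hQeq : Q r = a • 1 := hconst a h
      apply hne
      funext i
      have h1 : (∑ i, r i • Qi i) = Q r - (σ2 / c) • 1 := by rw [hQr]; exact (add_sub_cancel_right _ _).symm
      have h2 : r i = (Q r - (σ2 / c) • 1) ⟨0, hn⟩ i := by rw [← h1]; exact (hTrec i).symm
      rw [h2, hQeq, hrdag]
      rw [Matrix.sub_apply, Matrix.smul_apply, Matrix.smul_apply]
      by_cases hi : (i : ℕ) = 0
      · have : (⟨0, hn⟩ : Fin n) = i := Fin.ext (by simp [hi])
        rw [this]
        simp [Matrix.one_apply_eq, ha_def, hi]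
      · have : (⟨0, hn⟩ : Fin n) ≠ i := fun h => hi (by simpa using (congrArg Fin.val h).symm)
        rw [Matrix.one_apply_ne this]
        simp [hi]
    have hinv := jensen_inv hn a ha lam hpos hsum hlamne
    have htrr : (σ2 • (Q r)⁻¹).trace = σ2 * ∑ i, (lam i)⁻¹ := by
      rw [Matrix.trace_smul, htrinv, smul_eq_mul]
    rw [htrr, htr_dag]
    have : σ2 * ((n : ℝ) * a⁻¹) < σ2 * ∑ i, (lam i)⁻¹ := by
      exact mul_lt_mul_of_pos_left hinv hσ
    nlinarith [this]
end

section
/- Let P = diag(λ_1,...,λ_n) with all λ_i > 0, σ² > 0, and Q(r) = r_0 I_n + Σ_{i=1}^{n-1} r_i Q_i + σ² P^{-1}. Then the gradient of r' ↦ log det(σ² Q((ℰ, r'))^{-1}) at r' = 0 is zero; consequently r† = (ℰ, 0,...,0) is a stationary point, and being the convex problem's unique stationary point, r† minimizes log det(σ² Q(r)^{-1}) over the convex feasible set ℱ containing r†. -/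
open Matrix

lemma trace_eq_sum_eig' {n : ℕ} {A : Matrix (Fin n) (Fin n) ℝ} (hA : A.IsHermitian) :
    A.trace = ∑ i, hA.eigenvalues i := by
  conv_lhs => rw [hA.spectral_theorem]
  rw [Unitary.conjStarAlgAut_apply, Matrix.trace_mul_cycle]
  rw [show (star (hA.eigenvectorUnitary : Matrix (Fin n) (Fin n) ℝ)) *
      (hA.eigenvectorUnitary : Matrix (Fin n) (Fin n) ℝ) = 1 from
    (Matrix.mem_unitaryGroup_iff').mp hA.eigenvectorUnitary.2]
  rw [one_mul, Matrix.trace_diagonal]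
  simp

lemma amgm_prod_le_one' {n : ℕ} (hn : 0 < n) (μ : Fin n → ℝ) (hnn : ∀ i, 0 ≤ μ i)
    (hsum : ∑ i, μ i = (n : ℝ)) : ∏ i, μ i ≤ 1 := by
  have hn' : (0:ℝ) < n := Nat.cast_pos.2 hn
  have h1 : ∏ i : Fin n, (μ i) ^ ((n : ℝ)⁻¹) ≤ ∑ i : Fin n, (n : ℝ)⁻¹ * μ i :=
    Real.geom_mean_le_arith_mean_weighted Finset.univ (fun _ => (n:ℝ)⁻¹) μ
      (fun _ _ => by positivity)
      (by simp [Finset.card_univ, mul_inv_cancel₀ hn'.ne']) (fun i _ => hnn i)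
  rw [← Finset.mul_sum, hsum, inv_mul_cancel₀ hn'.ne'] at h1
  rw [Real.finset_prod_rpow Finset.univ μ (fun i _ => hnn i) _] at h1
  have h3 : ((∏ i, μ i) ^ ((n:ℝ)⁻¹)) ^ (n : ℝ) ≤ 1 ^ (n:ℝ) :=
    Real.rpow_le_rpow (Real.rpow_nonneg (Finset.prod_nonneg (fun i _ => hnn i)) _) h1 hn'.le
  rw [← Real.rpow_mul (Finset.prod_nonneg (fun i _ => hnn i)), inv_mul_cancel₀ hn'.ne',
    Real.rpow_one, Real.one_rpow] at h3
  exact h3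

/-- Hadamard-type bound: a PSD matrix with positive diagonal `d` has `det ≤ ∏ d`. -/
lemma hadamard_det_le' {n : ℕ} (hn : 0 < n) {A : Matrix (Fin n) (Fin n) ℝ}
    (hA : A.PosSemidef) (d : Fin n → ℝ) (hd : ∀ a, 0 < d a)
    (hdiag : ∀ a, A a a = d a) : A.det ≤ ∏ a, d a := by
  set s : Fin n → ℝ := fun a => (Real.sqrt (d a))⁻¹ with hs
  set B : Matrix (Fin n) (Fin n) ℝ := Matrix.diagonal s with hB
  have hBH : Bᴴ = B := by rw [hB, Matrix.diagonal_conjTranspose]; congr 1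
  have hA' : (Bᴴ * A * B).PosSemidef := hA.conjTranspose_mul_mul_same B
  set A' := Bᴴ * A * B with hA'def
  have hdiagA' : ∀ a, A' a a = 1 := by
    intro a
    rw [hA'def, hBH, hB, Matrix.mul_diagonal, Matrix.diagonal_mul, hdiag a]
    have h : Real.sqrt (d a) ≠ 0 := (Real.sqrt_pos.2 (hd a)).ne'
    rw [hs]
    field_simp
    rw [Real.sq_sqrt (hd a).le]
  have htr : A'.trace = (n : ℝ) := by
    rw [Matrix.trace]
    simp only [Matrix.diag_apply]
    rw [Finset.sum_congr rfl (fun a _ => hdiagA' a)]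
    simp
  have hμnonneg : ∀ i, 0 ≤ hA'.1.eigenvalues i := hA'.eigenvalues_nonneg
  have hμsum : ∑ i, hA'.1.eigenvalues i = (n : ℝ) := by rw [← trace_eq_sum_eig' hA'.1, htr]
  have hdetA' : A'.det = ∏ i, hA'.1.eigenvalues i := by
    simpa using hA'.1.det_eq_prod_eigenvalues
  have hamgm : A'.det ≤ 1 := by
    rw [hdetA']; exact amgm_prod_le_one' hn _ hμnonneg hμsum
  have hdet : A'.det = A.det * (∏ a, d a)⁻¹ := by
    rw [hA'def, Matrix.det_mul, Matrix.det_mul, hBH, hB, Matrix.det_diagonal]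
    have hss : (∏ a, s a) * (∏ a, s a) = (∏ a, d a)⁻¹ := by
      rw [← Finset.prod_mul_distrib, ← Finset.prod_inv_distrib]
      refine Finset.prod_congr rfl fun a _ => ?_
      rw [hs, ← mul_inv, Real.mul_self_sqrt (hd a).le]
    calc (∏ a, s a) * A.det * ∏ a, s a = A.det * ((∏ a, s a) * (∏ a, s a)) := by ring
    _ = A.det * (∏ a, d a)⁻¹ := by rw [hss]
  have hdpos : (0:ℝ) < ∏ a, d a := Finset.prod_pos fun a _ => hd a
  rw [hdet, mul_inv_le_iff₀ hdpos, one_mul] at hamgm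
  exact hamgm

/-- Jacobi-type lemma: the derivative of `det (A + t • B)` at `0` vanishes when `A` is
diagonal and `B` has zero diagonal. -/
lemma det_deriv_zero' {n : ℕ} (A B : Matrix (Fin n) (Fin n) ℝ)
    (hAoff : ∀ j l : Fin n, j ≠ l → A j l = 0) (hBdiag : ∀ j, B j j = 0) :
    HasDerivAt (fun t : ℝ => (A + t • B).det) 0 0 := by
  have key : ∀ σ : Equiv.Perm (Fin n),
      HasDerivAt (fun t : ℝ => ∏ j, (A + t • B) (σ j) j)
        (∑ j, (∏ k ∈ Finset.univ.erase j, (A + (0:ℝ) • B) (σ k) k) • B (σ j) j) 0 := by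
    intro σ
    exact HasDerivAt.fun_finsetProd (fun j _ => by
      simp only [Matrix.add_apply, Matrix.smul_apply, smul_eq_mul]
      exact (hasDerivAt_mul_const (B (σ j) j)).const_add (A (σ j) j))
  have hzero : ∀ σ : Equiv.Perm (Fin n),
      (∑ j, (∏ k ∈ Finset.univ.erase j, (A + (0:ℝ) • B) (σ k) k) • B (σ j) j) = 0 := by
    intro σ
    refine Finset.sum_eq_zero fun j _ => ?_
    by_cases hσ : σ j = j
    · rw [hσ, hBdiag, smul_zero]
    · have hmem : σ j ∈ Finset.univ.erase j := Finset.mem_erase.2 ⟨hσ, Finset.mem_univ _⟩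
      have hent : (A + (0:ℝ) • B) (σ (σ j)) (σ j) = 0 := by
        have hne : σ (σ j) ≠ σ j := fun h => hσ (σ.injective h)
        simp [hAoff _ _ hne]
      rw [Finset.prod_eq_zero (f := fun k => (A + (0:ℝ) • B) (σ k) k) hmem hent, zero_smul]
  have main := HasDerivAt.fun_sum (u := (Finset.univ : Finset (Equiv.Perm (Fin n))))
    (fun σ _ => ((key σ).const_mul ((Equiv.Perm.sign σ : ℤ) : ℝ)))
  have h0 : ∑ σ : Equiv.Perm (Fin n), ((Equiv.Perm.sign σ : ℤ) : ℝ) *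
      (∑ j, (∏ k ∈ Finset.univ.erase j, (A + (0:ℝ) • B) (σ k) k) • B (σ j) j) = 0 :=
    Finset.sum_eq_zero fun σ _ => by rw [hzero σ, mul_zero]
  rw [h0] at main
  refine main.congr_of_eventuallyEq (Filter.Eventually.of_forall fun t => ?_)
  beta_reduce
  rw [Matrix.det_apply]
  refine Finset.sum_congr rfl fun σ _ => ?_
  rw [Units.smul_def, zsmul_eq_mul]

lemma corr_shift' {N : ℕ} [NeZero N] (u : Fin N → ℝ) (a' b' c : Fin N) (hc : a' - c = b') :
    ∑ k, u k * u (k - c) = ∑ k, u (k + a') * u (k + b') := by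
  refine (Fintype.sum_equiv (Equiv.addRight a') _ _ (fun k => ?_)).symm
  have : k + a' - c = k + b' := by rw [add_sub_assoc, hc]
  rw [Equiv.coe_addRight, this]

lemma sub_castLE' {N n : ℕ} (hnN : n ≤ N) [NeZero N] (a b : Fin n) (hba : (b:ℕ) ≤ (a:ℕ)) :
    Fin.castLE hnN a - Fin.castLE hnN ⟨(a:ℕ) - (b:ℕ), by omega⟩ = Fin.castLE hnN b := by
  apply Fin.ext
  rw [Fin.sub_def]
  simp only [Fin.coe_castLE]
  have h1 : (a:ℕ) < N := lt_of_lt_of_le a.isLt hnN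
  have h2 : (b:ℕ) < N := lt_of_lt_of_le b.isLt hnN
  have : N - ((a:ℕ) - (b:ℕ)) + (a:ℕ) = N + (b:ℕ) := by omega
  rw [this, Nat.add_mod_left, Nat.mod_eq_of_lt h2]

/-- For a diagonal kernel `P = diag(λ_1,...,λ_n)` with all `λ_i > 0`, the gradient of
`r ↦ log det(σ² Q(r)⁻¹)` vanishes at `r† = (ℰ, 0, ..., 0)` (each partial derivative
in the directions `r_i`, `i ≠ 0`, is zero), and `r†` minimizes
`log det(σ² Q(r)⁻¹)` over the feasible set `ℱ`, which contains `r†`. -/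
theorem stmt17 (N n : ℕ) (hn : 0 < n) (hnN : n ≤ N)
    (lam : Fin n → ℝ) (hlam : ∀ i, 0 < lam i)
    (σ2 E : ℝ) (hσ : 0 < σ2) (hE : 0 < E)
    (P : Matrix (Fin n) (Fin n) ℝ) (hP : P = Matrix.diagonal lam)
    (Qi : Fin n → Matrix (Fin n) (Fin n) ℝ)
    (hQi : ∀ i j l : Fin n,
      Qi i j l = if |((j : ℕ) : ℤ) - ((l : ℕ) : ℤ)| = ((i : ℕ) : ℤ) then 1 else 0)
    (Q : (Fin n → ℝ) → Matrix (Fin n) (Fin n) ℝ)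
    (hQ : ∀ r : Fin n → ℝ, Q r = ∑ i : Fin n, r i • Qi i + σ2 • P⁻¹)
    (F : Set (Fin n → ℝ))
    (hF : F = {r : Fin n → ℝ | ∃ u : Fin N → ℝ, u ⬝ᵥ u = E ∧
      ∀ j : Fin n, r j = ∑ k : Fin N, u k * u (k - Fin.castLE hnN j)})
    (rdag : Fin n → ℝ) (hrdag : ∀ i : Fin n, rdag i = if (i : ℕ) = 0 then E else 0) :
    rdag ∈ F ∧
    (∀ i : Fin n, (i : ℕ) ≠ 0 →
      HasDerivAt
        (fun t : ℝ => Real.log ((σ2 • (Q (Function.update rdag i t))⁻¹).det))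
        0 (0 : ℝ)) ∧
    (∀ r ∈ F,
      Real.log ((σ2 • (Q rdag)⁻¹).det) ≤ Real.log ((σ2 • (Q r)⁻¹).det)) := by
  haveI : NeZero n := ⟨hn.ne'⟩
  haveI : NeZero N := ⟨by omega⟩
  -- the diagonal entries
  set d : Fin n → ℝ := fun a => E + σ2 * (lam a)⁻¹ with hd_def
  have hd : ∀ a, 0 < d a := fun a => by
    have := hlam a; positivity
  -- P⁻¹ computation
  have hPinv : P⁻¹ = Matrix.diagonal (fun a => (lam a)⁻¹) := by
    rw [hP]
    apply Matrix.inv_eq_right_inv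
    rw [Matrix.diagonal_mul_diagonal,
      show (fun i => lam i * (lam i)⁻¹) = fun _ => (1:ℝ) from
        funext fun a => mul_inv_cancel₀ (hlam a).ne',
      Matrix.diagonal_one]
  -- Qi 0 = 1
  have hQi0 : Qi 0 = 1 := by
    ext j l
    rw [hQi, Matrix.one_apply]
    by_cases h : j = l
    · subst h; simp
    · have hne : ((j:ℕ):ℤ) ≠ ((l:ℕ):ℤ) := by
        simp only [ne_eq, Nat.cast_inj]
        exact fun hc => h (Fin.ext hc)
      rw [if_neg (by simpa [abs_eq_zero, sub_eq_zero] using hne), if_neg h]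
  -- entry formula for ∑ i, r i • Qi i
  have happ : ∀ (r : Fin n → ℝ) (a b i₀ : Fin n),
      ((i₀:ℕ):ℤ) = |((a:ℕ):ℤ) - ((b:ℕ):ℤ)| →
      (∑ i, r i • Qi i) a b = r i₀ := by
    intro r a b i₀ h
    have hiff : ∀ i : Fin n, (|((a:ℕ):ℤ) - ((b:ℕ):ℤ)| = ((i:ℕ):ℤ)) ↔ i = i₀ := by
      intro i
      constructor
      · intro hi
        apply Fin.ext
        have : ((i:ℕ):ℤ) = ((i₀:ℕ):ℤ) := by rw [← hi, h]
        exact_mod_cast this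
      · rintro rfl; exact h.symm
    simp only [Matrix.sum_apply, Matrix.smul_apply, hQi, smul_eq_mul, mul_ite, mul_one, mul_zero]
    rw [Finset.sum_congr rfl (fun i _ => by rw [if_congr (hiff i) rfl rfl])]
    simp
  -- Q rdag = diagonal d
  have hsum_rdag : (∑ i, rdag i • Qi i) = E • Qi 0 := by
    rw [Finset.sum_eq_single (0 : Fin n)]
    · rw [hrdag]; simp
    · intro j _ hj
      rw [hrdag, if_neg (fun hc => hj (Fin.ext (by simpa using hc))), zero_smul]
    · intro h; exact absurd (Finset.mem_univ _) h
  have hQrdag : Q rdag = Matrix.diagonal d := by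
    rw [hQ, hsum_rdag, hQi0, hPinv, hd_def]
    ext a b
    by_cases h : a = b
    · subst h; simp
    · simp [Matrix.one_apply_ne h, Matrix.diagonal_apply_ne _ h, h]
  have hdetD : (Matrix.diagonal d).det = ∏ a, d a := Matrix.det_diagonal
  have hprodd_pos : (0:ℝ) < ∏ a, d a := Finset.prod_pos fun a _ => hd a
  -- helper to rewrite the log expression
  have hlog_form : ∀ A : Matrix (Fin n) (Fin n) ℝ,
      (σ2 • A⁻¹).det = σ2 ^ n * (A.det)⁻¹ := by
    intro A
    rw [Matrix.det_smul, Matrix.det_nonsing_inv, Ring.inverse_eq_inv', Fintype.card_fin]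
  refine ⟨?_, ?_, ?_⟩
  · -- rdag ∈ F
    rw [hF]
    refine ⟨fun k => if k = 0 then Real.sqrt E else 0, ?_, ?_⟩
    · beta_reduce
      simp only [dotProduct, ite_mul, zero_mul, mul_ite, mul_zero]
      rw [Finset.sum_ite_eq' Finset.univ (0 : Fin N)]
      simp [Real.mul_self_sqrt hE.le]
    · intro j
      beta_reduce
      rw [hrdag]
      rw [Finset.sum_eq_single (0 : Fin N)]
      · simp only [if_pos rfl]
        by_cases h : (j:ℕ) = 0
        · have : Fin.castLE hnN j = 0 := by
            apply Fin.ext; simpa using h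
          rw [this, if_pos h]
          simp [Real.mul_self_sqrt hE.le]
        · have : (0 : Fin N) - Fin.castLE hnN j ≠ 0 := by
            rw [zero_sub, neg_ne_zero]
            intro hc
            exact h (by simpa using congrArg Fin.val hc)
          rw [if_neg this, mul_zero, if_neg h]
      · intro k _ hk; rw [if_neg hk, zero_mul]
      · intro h; exact absurd (Finset.mem_univ _) h
  · -- stationarity
    intro i hi
    -- Q (update rdag i t) = diagonal d + t • Qi i
    have hQup : ∀ t : ℝ, Q (Function.update rdag i t) = Matrix.diagonal d + t • Qi i := by
      intro t
      have hfun : (fun j => Function.update rdag i t j • Qi j) =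
          Function.update (fun j => rdag j • Qi j) i (t • Qi i) := by
        funext j
        by_cases h : j = i
        · subst h; simp
        · rw [Function.update_of_ne h, Function.update_of_ne h]
      have hsum : (∑ j, Function.update rdag i t j • Qi j)
          = t • Qi i + ∑ j ∈ Finset.univ \ {i}, rdag j • Qi j := by
        rw [hfun, Finset.sum_update_of_mem (Finset.mem_univ i)]
      have hrest : (∑ j ∈ Finset.univ \ {i}, rdag j • Qi j) = E • Qi 0 := by
        rw [Finset.sum_eq_single_of_mem (0 : Fin n)]
        · rw [hrdag]; simp
        · simp only [Finset.mem_sdiff, Finset.mem_univ, Finset.mem_singleton, true_and]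
          intro hc
          exact hi (by simpa using congrArg Fin.val hc.symm)
        · intro j _ hj
          rw [hrdag, if_neg (fun hc => hj (Fin.ext (by simpa using hc))), zero_smul]
      rw [hQ, hsum, hrest]
      have : E • Qi 0 + σ2 • P⁻¹ = Matrix.diagonal d := by
        rw [← hsum_rdag, ← hQ, hQrdag]
      rw [add_assoc, this, add_comm]
    -- derivative of the determinant
    have hBdiag : ∀ j, Qi i j j = 0 := by
      intro j
      rw [hQi]
      rw [if_neg]
      simp only [sub_self, abs_zero]
      exact fun hc => hi (by exact_mod_cast hc.symm)
    have hdet_deriv : HasDerivAt (fun t : ℝ => (Q (Function.update rdag i t)).det) 0 0 := by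
      have h := det_deriv_zero' (Matrix.diagonal d) (Qi i)
        (fun j l hjl => Matrix.diagonal_apply_ne _ hjl) hBdiag
      have heq : (fun t : ℝ => (Q (Function.update rdag i t)).det)
          = fun t : ℝ => ((Matrix.diagonal d) + t • Qi i).det := by
        funext t; rw [hQup t]
      rw [heq]
      exact h
    have hdet0 : (Q (Function.update rdag i (0:ℝ))).det = ∏ a, d a := by
      rw [hQup 0, zero_smul, add_zero, hdetD]
    have hne0 : (Q (Function.update rdag i (0:ℝ))).det ≠ 0 := by
      rw [hdet0]; exact hprodd_pos.ne'
    -- assemble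
    have hg : HasDerivAt (fun t : ℝ => σ2 ^ n * ((Q (Function.update rdag i t)).det)⁻¹) 0 0 := by
      have := (hdet_deriv.inv hne0).const_mul (σ2 ^ n)
      simpa using this
    have hg0 : σ2 ^ n * ((Q (Function.update rdag i (0:ℝ))).det)⁻¹ ≠ 0 := by
      rw [hdet0]
      positivity
    have hfinal := hg.log hg0
    have heq : (fun t : ℝ => Real.log ((σ2 • (Q (Function.update rdag i t))⁻¹).det))
        = fun t : ℝ => Real.log (σ2 ^ n * ((Q (Function.update rdag i t)).det)⁻¹) := by
      funext t; rw [hlog_form]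
    rw [heq]
    simpa using hfinal
  · -- minimization
    intro r hr
    rw [hF] at hr
    obtain ⟨u, huE, hru⟩ := hr
    -- the correlation matrix
    set V : Matrix (Fin N) (Fin n) ℝ := fun k a => u (k + Fin.castLE hnN a) with hV
    have hr_corr : ∀ (a b : Fin n), (b:ℕ) ≤ (a:ℕ) →
        r ⟨(a:ℕ) - (b:ℕ), by omega⟩ =
          ∑ k, u (k + Fin.castLE hnN a) * u (k + Fin.castLE hnN b) := by
      intro a b hba
      rw [hru]
      exact corr_shift' u _ _ _ (sub_castLE' hnN a b hba)
    have hVHV : ∀ a b : Fin n, (Vᴴ * V) a b =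
        ∑ k, u (k + Fin.castLE hnN a) * u (k + Fin.castLE hnN b) := by
      intro a b
      rw [Matrix.mul_apply]
      refine Finset.sum_congr rfl fun k _ => ?_
      rw [Matrix.conjTranspose_apply, hV]
      simp
    have hRV : (∑ i, r i • Qi i) = Vᴴ * V := by
      ext a b
      rcases le_total (b:ℕ) (a:ℕ) with hba | hab
      · rw [happ r a b ⟨(a:ℕ) - (b:ℕ), by omega⟩ (by
          simp only []
          rw [abs_of_nonneg (by
            have : ((b:ℕ):ℤ) ≤ ((a:ℕ):ℤ) := by exact_mod_cast hba
            omega)]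
          omega), hr_corr a b hba, hVHV]
      · rw [happ r a b ⟨(b:ℕ) - (a:ℕ), by omega⟩ (by
          simp only []
          rw [abs_of_nonpos (by
            have : ((a:ℕ):ℤ) ≤ ((b:ℕ):ℤ) := by exact_mod_cast hab
            omega)]
          omega), hr_corr b a hab, hVHV]
        exact Finset.sum_congr rfl fun k _ => mul_comm _ _
    -- r 0 = E
    have hr0 : r 0 = E := by
      rw [hru]
      have hc0 : Fin.castLE hnN (0 : Fin n) = 0 := by apply Fin.ext; simp
      rw [hc0]
      simp only [sub_zero]
      rw [← huE]
      rfl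
    -- Q r is positive definite with diagonal d
    have hQr : Q r = Vᴴ * V + Matrix.diagonal (fun a => σ2 * (lam a)⁻¹) := by
      rw [hQ, hRV, hPinv]
      congr 1
      rw [← Matrix.diagonal_smul]
      congr 1
    have hQrPD : (Q r).PosDef := by
      rw [hQr]
      exact Matrix.PosDef.posSemidef_add (Matrix.posSemidef_conjTranspose_mul_self V)
        (Matrix.posDef_diagonal_iff.2 fun a => by have := hlam a; positivity)
    have hQrdiag : ∀ a, Q r a a = d a := by
      intro a
      rw [hQ, Matrix.add_apply, happ r a a 0 (by simp), hr0, hPinv, hd_def]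
      simp
    have hdet_le : (Q r).det ≤ ∏ a, d a :=
      hadamard_det_le' hn hQrPD.posSemidef d hd hQrdiag
    have hdet_pos : 0 < (Q r).det := hQrPD.det_pos
    -- conclude
    rw [hlog_form, hlog_form, hQrdag, hdetD]
    have h1 : (0:ℝ) < σ2 ^ n * (∏ a, d a)⁻¹ := by positivity
    apply Real.log_le_log h1
    apply mul_le_mul_of_nonneg_left _ (by positivity : (0:ℝ) ≤ σ2 ^ n)
    exact inv_anti₀ hdet_pos hdet_le
end
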